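/- arXiv:0801.2322 — 6 statements merged into one kernel-verified Lean document; each statement's English description precedes it below -/
import Mathlib

section
/- Let X be a graph and Γ a group acting on X by graph automorphisms such that the quotient X/Γ is simply laced. Fix orbits U and W and any vertex u₀ ∈ U. Then for every path V₀, V₁, ..., V_r in the quotient graph X/Γ with V₀ = U, there is a unique path v₀, v₁, ..., v_r in X with v₀ = u₀ and v_j ∈ V_j for all 0 ≤ j ≤ r. -/
attribute [local instance] Classical.propDecidable

/-- The quotient of a graph `X` by the action of a group `Γ`: vertices are the
orbits, with distinct orbits adjacent iff they contain adjacent representatives. -/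
def quotGraph {V : Type*} (X : SimpleGraph V) (Γ : Type*) [Group Γ] [MulAction Γ V] :
    SimpleGraph (Quotient (MulAction.orbitRel Γ V)) where
  Adj U W := U ≠ W ∧ ∃ u w : V, Quotient.mk (MulAction.orbitRel Γ V) u = U ∧
      Quotient.mk (MulAction.orbitRel Γ V) w = W ∧ X.Adj u w
  symm := by
    constructor
    rintro U W ⟨hne, u, w, hu, hw, h⟩
    exact ⟨hne.symm, w, u, hw, hu, h.symm⟩
  loopless := by
    constructor
    rintro U ⟨hne, -⟩
    exact hne rfl

/-- The quotient `X/Γ` is simply laced: no edge of `X` joins two vertices of a single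
orbit, and no vertex of `X` has two distinct neighbors in the same orbit. -/
def SimplyLaced {V : Type*} (X : SimpleGraph V) (Γ : Type*) [Group Γ] [MulAction Γ V] : Prop :=
  (∀ u v : V, X.Adj u v →
      Quotient.mk (MulAction.orbitRel Γ V) u ≠ Quotient.mk (MulAction.orbitRel Γ V) v) ∧
  (∀ u v w : V, X.Adj u v → X.Adj u w →
      Quotient.mk (MulAction.orbitRel Γ V) v = Quotient.mk (MulAction.orbitRel Γ V) w → v = w)


private lemma step_lift {V : Type*} (X : SimpleGraph V) (Γ : Type*) [Group Γ] [MulAction Γ V]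
    (hAut : ∀ (g : Γ) (u v : V), X.Adj u v ↔ X.Adj (g • u) (g • v))
    (hSL : SimplyLaced X Γ) (u : V) (W : Quotient (MulAction.orbitRel Γ V))
    (hadj : (quotGraph X Γ).Adj (Quotient.mk (MulAction.orbitRel Γ V) u) W) :
    ∃! w : V, X.Adj u w ∧ Quotient.mk (MulAction.orbitRel Γ V) w = W := by
  obtain ⟨hne, u', w', hu', hw', h⟩ := hadj
  have hr : u' ∈ MulAction.orbit Γ u := Quotient.exact hu'
  obtain ⟨g, hg⟩ := hr
  have hg' : g • u = u' := hg
  refine ⟨g⁻¹ • w', ⟨?_, ?_⟩, ?_⟩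
  · rw [hAut g u (g⁻¹ • w'), smul_inv_smul, hg']
    exact h
  · rw [← hw']
    have hmem : g⁻¹ • w' ∈ MulAction.orbit Γ w' := ⟨g⁻¹, rfl⟩
    exact Quotient.sound hmem
  · rintro w₂ ⟨ha2, hq2⟩
    refine hSL.2 u w₂ (g⁻¹ • w') ha2 ?_ ?_
    · rw [hAut g u (g⁻¹ • w'), smul_inv_smul, hg']
      exact h
    · rw [hq2, ← hw']
      have hmem : g⁻¹ • w' ∈ MulAction.orbit Γ w' := ⟨g⁻¹, rfl⟩
      exact (Quotient.sound hmem).symm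

/-- Unique path lifting for simply laced quotients: every path in `X/Γ`
starting at the orbit of `u₀` lifts to a unique path in `X` starting at `u₀`. -/
theorem quotGraph_unique_path_lift
    {V : Type*} (X : SimpleGraph V) (Γ : Type*) [Group Γ] [MulAction Γ V]
    (hAut : ∀ (g : Γ) (u v : V), X.Adj u v ↔ X.Adj (g • u) (g • v))
    (hSL : SimplyLaced X Γ) (r : ℕ)
    (Vp : Fin (r + 1) → Quotient (MulAction.orbitRel Γ V)) (u₀ : V)
    (h0 : Vp 0 = Quotient.mk (MulAction.orbitRel Γ V) u₀)
    (hpath : ∀ j : Fin r, (quotGraph X Γ).Adj (Vp j.castSucc) (Vp j.succ)) :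
    ∃! v : Fin (r + 1) → V, v 0 = u₀ ∧
      (∀ j, Quotient.mk (MulAction.orbitRel Γ V) (v j) = Vp j) ∧
      ∀ j : Fin r, X.Adj (v j.castSucc) (v j.succ) := by
  induction r generalizing u₀ with
  | zero =>
    refine ⟨fun _ => u₀, ⟨rfl, fun j => ?_, fun j => j.elim0⟩, ?_⟩
    · rw [Fin.fin_one_eq_zero j]
      exact h0.symm
    · rintro w ⟨hw0, -, -⟩
      funext j
      rw [Fin.fin_one_eq_zero j]
      exact hw0
  | succ r ih =>
    have hadj0 : (quotGraph X Γ).Adj (Quotient.mk (MulAction.orbitRel Γ V) u₀)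
        (Vp (0 : Fin (r + 1)).succ) := by
      rw [← h0]
      exact hpath 0
    obtain ⟨u₁, ⟨hu₁adj, hu₁q⟩, hu₁uniq⟩ := step_lift X Γ hAut hSL u₀ _ hadj0
    obtain ⟨v', ⟨hv'0, hv'q, hv'adj⟩, hv'uniq⟩ :=
      ih (fun j => Vp j.succ) u₁ hu₁q.symm (by
        intro j
        have := hpath j.succ
        rwa [← Fin.succ_castSucc] at this)
    refine ⟨Fin.cases u₀ v', ⟨?_, ?_, ?_⟩, ?_⟩
    · simp
    · intro j
      induction j using Fin.cases with
      | zero => simpa using h0.symm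
      | succ i => simpa using hv'q i
    · intro j
      induction j using Fin.cases with
      | zero =>
        show X.Adj (Fin.cases u₀ v' (Fin.castSucc 0)) (Fin.cases u₀ v' (Fin.succ 0))
        rw [Fin.castSucc_zero, Fin.cases_zero, Fin.cases_succ, hv'0]
        exact hu₁adj
      | succ i =>
        show X.Adj (Fin.cases u₀ v' i.succ.castSucc) (Fin.cases u₀ v' i.succ.succ)
        rw [← Fin.succ_castSucc, Fin.cases_succ, Fin.cases_succ]
        exact hv'adj i
    · rintro w ⟨hw0, hwq, hwadj⟩
      have hw1' : w (Fin.succ 0) = u₁ := by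
        refine hu₁uniq _ ⟨?_, ?_⟩
        · have := hwadj 0
          rwa [Fin.castSucc_zero, hw0] at this
        · exact hwq (Fin.succ 0)
      have : (fun i : Fin (r + 1) => w i.succ) = v' := by
        refine hv'uniq _ ⟨hw1', fun j => hwq j.succ, ?_⟩
        intro j
        have := hwadj j.succ
        rwa [← Fin.succ_castSucc] at this
      funext j
      induction j using Fin.cases with
      | zero => simpa using hw0
      | succ i =>
        have := congrFun this i
        simpa using this
end

section
/- For a graph G with at least k vertices, the quotient of the restricted k-th power G^(k) by the natural action of the symmetric group S_k is a simply laced quotient, and this quotient graph is isomorphic to the k-th symmetric power G^{k}. -/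
attribute [local instance] Classical.propDecidable


/-- The restricted k-th power of a graph: vertices are k-tuples of pairwise distinct
vertices; two tuples are adjacent iff they agree in all but one coordinate, at which
the entries are adjacent in `G`. -/
def restPow {V : Type*} (G : SimpleGraph V) (k : ℕ) :
    SimpleGraph {x : Fin k → V // Function.Injective x} where
  Adj x y := ∃ u, G.Adj (x.1 u) (y.1 u) ∧ ∀ l, l ≠ u → x.1 l = y.1 l
  symm := by
    constructor
    rintro x y ⟨u, h, he⟩
    exact ⟨u, h.symm, fun l hl => (he l hl).symm⟩
  loopless := by
    constructor
    rintro x ⟨u, h, -⟩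
    exact G.irrefl h

/-- The natural action of the symmetric group `S_k` on tuples of pairwise distinct
vertices, by permuting the coordinates. -/
instance permMulAction {V : Type*} {k : ℕ} :
    MulAction (Equiv.Perm (Fin k)) {x : Fin k → V // Function.Injective x} where
  smul σ x := ⟨x.1 ∘ (σ⁻¹ : Equiv.Perm (Fin k)), x.2.comp (Equiv.injective _)⟩
  one_smul x := Subtype.ext (funext fun i => congrArg x.1 (by simp))
  mul_smul σ τ x := Subtype.ext (funext fun i =>
    congrArg x.1 (by simp [mul_inv_rev, Equiv.Perm.mul_apply]))

/-- The k-th symmetric power of a graph: vertices are the k-element subsets of the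
vertex set; two k-subsets are adjacent iff their symmetric difference is an edge. -/
def symPow {V : Type*} [DecidableEq V] (G : SimpleGraph V) (k : ℕ) :
    SimpleGraph {s : Finset V // s.card = k} where
  Adj s t := ∃ a b : V, G.Adj a b ∧ symmDiff s.1 t.1 = {a, b}
  symm := by
    constructor
    rintro s t ⟨a, b, hab, h⟩
    exact ⟨a, b, hab, by rw [symmDiff_comm]; exact h⟩
  loopless := by
    constructor
    rintro s ⟨a, b, hab, h⟩
    rw [symmDiff_self] at h
    have : a ∈ (⊥ : Finset V) := h ▸ Finset.mem_insert_self a {b}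
    simp at this

section Aux

attribute [local instance] Classical.propDecidable

variable {V : Type*} [DecidableEq V] {k : ℕ}

private abbrev Tup (V : Type*) (k : ℕ) := {x : Fin k → V // Function.Injective x}

private def img (x : Tup V k) : Finset V := Finset.univ.image x.1

private lemma mem_img {x : Tup V k} {v : V} : v ∈ img x ↔ ∃ i, x.1 i = v := by
  simp [img]

private lemma img_card (x : Tup V k) : (img x).card = k := by
  rw [img, Finset.card_image_of_injective _ x.2, Finset.card_univ, Fintype.card_fin]

private lemma smul_val (σ : Equiv.Perm (Fin k)) (x : Tup V k) :
    (σ • x : Tup V k).1 = x.1 ∘ ⇑σ⁻¹ := rfl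

private lemma img_smul (σ : Equiv.Perm (Fin k)) (x : Tup V k) : img (σ • x) = img x := by
  ext v
  simp only [mem_img, smul_val, Function.comp]
  constructor
  · rintro ⟨i, hi⟩; exact ⟨σ⁻¹ i, hi⟩
  · rintro ⟨i, hi⟩; exact ⟨σ i, by simpa using hi⟩

private lemma orbitMk_eq_iff (x y : Tup V k) :
    Quotient.mk (MulAction.orbitRel (Equiv.Perm (Fin k)) (Tup V k)) x =
      Quotient.mk (MulAction.orbitRel (Equiv.Perm (Fin k)) (Tup V k)) y ↔ img x = img y := by
  constructor
  · intro h
    have h' : x ∈ MulAction.orbit (Equiv.Perm (Fin k)) y := Quotient.exact h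
    obtain ⟨σ, hσ⟩ := MulAction.mem_orbit_iff.mp h'
    rw [← hσ, img_smul]
  · intro h
    have hex : ∀ i, ∃ j, y.1 j = x.1 i := fun i => mem_img.mp (h ▸ mem_img.mpr ⟨i, rfl⟩)
    choose f hf using hex
    have hfinj : Function.Injective f := fun i j hij => x.2 (by rw [← hf i, ← hf j, hij])
    let σ : Equiv.Perm (Fin k) := Equiv.ofBijective f (Finite.injective_iff_bijective.mp hfinj)
    refine Quotient.sound (show x ∈ MulAction.orbit (Equiv.Perm (Fin k)) y from
      MulAction.mem_orbit_iff.mpr ⟨σ⁻¹, Subtype.ext (funext fun i => ?_)⟩)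
    show y.1 (σ⁻¹⁻¹ i) = x.1 i
    rw [inv_inv]
    exact hf i

private lemma adj_not_mem {G : SimpleGraph V} {x y : Tup V k} {u : Fin k}
    (hadj : G.Adj (x.1 u) (y.1 u)) (he : ∀ l, l ≠ u → x.1 l = y.1 l) :
    x.1 u ∉ img y := by
  rw [mem_img]
  rintro ⟨j, hj⟩
  rcases eq_or_ne j u with rfl | hju
  · exact hadj.ne' hj
  · exact hju (x.2 ((he j hju).trans hj))

private lemma symmDiff_img {G : SimpleGraph V} {x y : Tup V k} {u : Fin k}
    (hadj : G.Adj (x.1 u) (y.1 u)) (he : ∀ l, l ≠ u → x.1 l = y.1 l) :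
    symmDiff (img x) (img y) = {x.1 u, y.1 u} := by
  have hxu : x.1 u ∉ img y := adj_not_mem hadj he
  have hyu : y.1 u ∉ img x := adj_not_mem hadj.symm (fun l hl => (he l hl).symm)
  ext v
  rw [Finset.mem_symmDiff, Finset.mem_insert, Finset.mem_singleton]
  constructor
  · rintro (⟨hvx, hvy⟩ | ⟨hvy, hvx⟩)
    · obtain ⟨i, hi⟩ := mem_img.mp hvx
      rcases eq_or_ne i u with rfl | hiu
      · exact Or.inl hi.symm
      · exact absurd (mem_img.mpr ⟨i, (he i hiu).symm.trans hi⟩) hvy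
    · obtain ⟨i, hi⟩ := mem_img.mp hvy
      rcases eq_or_ne i u with rfl | hiu
      · exact Or.inr hi.symm
      · exact absurd (mem_img.mpr ⟨i, (he i hiu).trans hi⟩) hvx
  · rintro (rfl | rfl)
    · exact Or.inl ⟨mem_img.mpr ⟨u, rfl⟩, hxu⟩
    · exact Or.inr ⟨mem_img.mpr ⟨u, rfl⟩, hyu⟩

private lemma adj_rep {G : SimpleGraph V} (x y : Tup V k) {a b : V}
    (hG : G.Adj a b) (hsd : symmDiff (img x) (img y) = {a, b})
    (hax : a ∈ img x) (hay : a ∉ img y) :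
    ∃ y' : Tup V k, img y' = img y ∧ (restPow G k).Adj x y' := by
  have hbsd : b ∈ symmDiff (img x) (img y) := by rw [hsd]; simp
  rw [Finset.mem_symmDiff] at hbsd
  have hby : b ∈ img y ∧ b ∉ img x := by
    rcases hbsd with ⟨hbx, hbny⟩ | h
    · exfalso
      have hsub : img y ⊆ img x := by
        intro v hv
        by_contra hvx
        have hmem : v ∈ symmDiff (img x) (img y) := Finset.mem_symmDiff.mpr (Or.inr ⟨hv, hvx⟩)
        rw [hsd] at hmem
        rcases Finset.mem_insert.mp hmem with rfl | h
        · exact hay hv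
        · rw [Finset.mem_singleton] at h; subst h; exact hbny hv
      have heq : img x = img y :=
        (Finset.eq_of_subset_of_card_le hsub (by rw [img_card, img_card])).symm
      rw [heq, symmDiff_self] at hsd
      have : a ∈ (⊥ : Finset V) := by rw [hsd]; simp
      simp at this
    · exact h
  obtain ⟨u, hu⟩ := mem_img.mp hax
  have hinj : Function.Injective (Function.update x.1 u b) := by
    have hb' : ∀ i, i ≠ u → Function.update x.1 u b i ≠ b := by
      intro i hi h
      rw [Function.update_of_ne hi] at h
      exact hby.2 (mem_img.mpr ⟨i, h⟩)
    intro i j hij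
    by_cases hi : i = u <;> by_cases hj : j = u
    · rw [hi, hj]
    · subst hi; rw [Function.update_self] at hij; exact absurd hij.symm (hb' j hj)
    · subst hj; rw [Function.update_self] at hij; exact absurd hij (hb' i hi)
    · rw [Function.update_of_ne hi, Function.update_of_ne hj] at hij; exact x.2 hij
  refine ⟨⟨Function.update x.1 u b, hinj⟩, ?_, ⟨u, ?_, ?_⟩⟩
  · ext v
    rw [mem_img]
    have hval : ∀ i, ((⟨Function.update x.1 u b, hinj⟩ : Tup V k)).1 i =
        Function.update x.1 u b i := fun _ => rfl
    simp only [hval]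
    have hchar : v ∈ img y ↔ (v ∈ img x ∧ v ≠ a) ∨ v = b := by
      constructor
      · intro hv
        by_cases hvx : v ∈ img x
        · refine Or.inl ⟨hvx, ?_⟩
          rintro rfl; exact hay hv
        · have hmem : v ∈ symmDiff (img x) (img y) := Finset.mem_symmDiff.mpr (Or.inr ⟨hv, hvx⟩)
          rw [hsd] at hmem
          rcases Finset.mem_insert.mp hmem with rfl | h
          · exact absurd hv hay
          · exact Or.inr (Finset.mem_singleton.mp h)
      · rintro (⟨hvx, hva⟩ | rfl)
        · by_contra hvy
          have hmem : v ∈ symmDiff (img x) (img y) := Finset.mem_symmDiff.mpr (Or.inl ⟨hvx, hvy⟩)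
          rw [hsd] at hmem
          rcases Finset.mem_insert.mp hmem with rfl | h
          · exact hva rfl
          · rw [Finset.mem_singleton] at h; subst h; exact hby.2 hvx
        · exact hby.1
    rw [hchar]
    constructor
    · rintro ⟨i, rfl⟩
      rcases eq_or_ne i u with rfl | hi
      · rw [Function.update_self]; exact Or.inr rfl
      · rw [Function.update_of_ne hi]
        refine Or.inl ⟨mem_img.mpr ⟨i, rfl⟩, ?_⟩
        rw [← hu]
        exact fun h => hi (x.2 h)
    · rintro (⟨hvx, hva⟩ | rfl)
      · obtain ⟨i, rfl⟩ := mem_img.mp hvx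
        have hi : i ≠ u := fun h => hva (by rw [h, hu])
        exact ⟨i, Function.update_of_ne hi _ _⟩
      · exact ⟨u, Function.update_self _ _ _⟩
  · show G.Adj (x.1 u) (Function.update x.1 u b u)
    rw [Function.update_self, hu]
    exact hG
  · intro l hl
    exact (Function.update_of_ne hl _ _).symm

end Aux
/-- For a graph with at least `k` vertices, the quotient of the restricted
k-th power by the natural `S_k`-action is simply laced, and this quotient graph is
isomorphic to the k-th symmetric power. -/
theorem restPow_quotient_simplyLaced_and_iso_symPow
    {V : Type*} [Fintype V] [DecidableEq V] (G : SimpleGraph V) (k : ℕ)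
    (hk : k ≤ Fintype.card V) :
    SimplyLaced (restPow G k) (Equiv.Perm (Fin k)) ∧
      Nonempty ((quotGraph (restPow G k) (Equiv.Perm (Fin k))) ≃g (symPow G k)) := by
  constructor
  · constructor
    · rintro x y ⟨u, hadj, he⟩ h
      exact adj_not_mem hadj he (((orbitMk_eq_iff x y).mp h) ▸ mem_img.mpr ⟨u, rfl⟩)
    · rintro x y z ⟨u, hadjy, hey⟩ ⟨w, hadjz, hez⟩ h
      have himg := (orbitMk_eq_iff y z).mp h
      have huw : u = w := by
        by_contra huw
        have h2 : x.1 u ∈ img z := mem_img.mpr ⟨u, (hez u huw).symm⟩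
        exact adj_not_mem hadjy hey (himg ▸ h2)
      subst huw
      refine Subtype.ext (funext fun i => ?_)
      rcases eq_or_ne i u with rfl | hiu
      · have hmem : y.1 i ∈ img z := himg ▸ mem_img.mpr ⟨i, rfl⟩
        obtain ⟨j, hj⟩ := mem_img.mp hmem
        rcases eq_or_ne j i with rfl | hji
        · exact hj.symm
        · exfalso
          have h' : y.1 i = y.1 j := by rw [← hey j hji, hez j hji]; exact hj.symm
          exact hji (y.2 h').symm
      · rw [← hey i hiu, hez i hiu]
  · let F : Quotient (MulAction.orbitRel (Equiv.Perm (Fin k)) (Tup V k)) →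
        {s : Finset V // s.card = k} :=
      Quotient.lift (fun x => ⟨img x, img_card x⟩)
        (fun a b h => Subtype.ext ((orbitMk_eq_iff a b).mp (Quotient.sound h)))
    have hinj : Function.Injective F := by
      intro U W
      induction U using Quotient.ind
      induction W using Quotient.ind
      intro h
      exact (orbitMk_eq_iff _ _).mpr (congrArg Subtype.val h)
    have hsurj : Function.Surjective F := by
      rintro ⟨s, hs⟩
      let e : Fin k ≃ s := (Fintype.equivFinOfCardEq (by rw [Fintype.card_coe, hs])).symm
      refine ⟨Quotient.mk _ ⟨fun i => (e i).1, fun i j hij => e.injective (Subtype.ext hij)⟩,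
        Subtype.ext ?_⟩
      show img _ = s
      ext v
      rw [mem_img]
      constructor
      · rintro ⟨i, rfl⟩; exact (e i).2
      · intro hv; exact ⟨e.symm ⟨v, hv⟩, by simp⟩
    have hiff : ∀ x y : Tup V k,
        (quotGraph (restPow G k) (Equiv.Perm (Fin k))).Adj
            (Quotient.mk (MulAction.orbitRel (Equiv.Perm (Fin k)) (Tup V k)) x)
            (Quotient.mk (MulAction.orbitRel (Equiv.Perm (Fin k)) (Tup V k)) y) ↔
          (symPow G k).Adj ⟨img x, img_card x⟩ ⟨img y, img_card y⟩ := by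
      intro x y
      constructor
      · rintro ⟨hne, a, b, ha, hb, u, hGab, he⟩
        have hia : img a = img x := (orbitMk_eq_iff a x).mp ha
        have hib : img b = img y := (orbitMk_eq_iff b y).mp hb
        refine ⟨a.1 u, b.1 u, hGab, ?_⟩
        show symmDiff (img x) (img y) = _
        rw [← hia, ← hib]
        exact symmDiff_img hGab he
      · rintro ⟨a, b, hGab, hsd⟩
        have hasd : a ∈ symmDiff (img x) (img y) := by rw [hsd]; simp
        rw [Finset.mem_symmDiff] at hasd
        rcases hasd with ⟨hax, hay⟩ | ⟨hay, hax⟩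
        · obtain ⟨y', hy', hadj⟩ := adj_rep x y hGab hsd hax hay
          refine ⟨?_, x, y', rfl, (orbitMk_eq_iff y' y).mpr hy', hadj⟩
          intro h
          exact hay (((orbitMk_eq_iff x y).mp h) ▸ hax)
        · obtain ⟨x', hx', hadj⟩ :=
            adj_rep y x hGab (by rw [symmDiff_comm]; exact hsd) hay hax
          refine ⟨?_, x', y, (orbitMk_eq_iff x' x).mpr hx', rfl, hadj.symm⟩
          intro h
          exact hax (((orbitMk_eq_iff x y).mp h).symm ▸ hay)
    refine ⟨⟨Equiv.ofBijective F ⟨hinj, hsurj⟩, ?_⟩⟩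
    intro U W
    induction U using Quotient.ind
    induction W using Quotient.ind
    exact (hiff _ _).symm
end

section
/- Let G and H be graphs on n vertices. If the stable 2-dimensional Weisfeiler-Lehman colorings of G and H yield equal multisets of colors (in every round), then G and H are cospectral. -/
attribute [local instance] Classical.propDecidable

/-- The type of "types" (isomorphism types) of k-tuples: the pattern of equalities
and of adjacencies among the entries. -/
def Tp (k : ℕ) : Type := (Fin k → Fin k → Prop) × (Fin k → Fin k → Prop)

/-- The type `tp` of a k-tuple of vertices: which entries are equal and which are
adjacent. Two tuples are equivalent iff they have the same `tp`. -/
def tp {V : Type*} (G : SimpleGraph V) {k : ℕ} (x : Fin k → V) : Tp k :=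
  (fun a b => x a = x b, fun a b => G.Adj (x a) (x b))

/-- The type of colors used at round `r+1` of the k-dimensional Weisfeiler-Lehman
refinement (round indexing starts at `0` here, corresponding to round `1` of the
usual presentation). -/
def WLColor (k : ℕ) : ℕ → Type
  | 0 => Tp k
  | r + 1 => Multiset (Tp (k + 1) × (Fin k → WLColor k r))

/-- The k-dimensional Weisfeiler-Lehman coloring of k-tuples: round `0` is the type
`tp`, and round `r+1` attaches to a tuple the multiset, over all vertices `m`, of the
type of the extended `(k+1)`-tuple together with the round-`r` colors of the tuples
obtained by substituting `m` into each of the `k` positions. -/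
def WL {V : Type*} [Fintype V] (G : SimpleGraph V) (k : ℕ) :
    (r : ℕ) → (Fin k → V) → WLColor k r
  | 0, x => tp G x
  | r + 1, x =>
      Finset.univ.val.map fun m : V =>
        (tp G (Fin.snoc x m), fun t => WL G k r (Function.update x t m))



open Matrix Polynomial in
lemma aux_charpoly_conj {n R : Type*} [Fintype n] [DecidableEq n] [CommRing R]
    (U M V : Matrix n n R) (hUV : U * V = 1) (hVU : V * U = 1) :
    (U * M * V).charpoly = M.charpoly := by
  unfold Matrix.charpoly
  have hc : ∀ W : Matrix n n R[X], Commute (scalar n (X : R[X])) W :=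
    fun W => scalar_commute _ (fun r => Commute.all _ _) _
  have key : charmatrix (U * M * V) =
      ((C : R →+* R[X]).mapMatrix U) * charmatrix M * ((C : R →+* R[X]).mapMatrix V) := by
    unfold charmatrix
    rw [mul_sub, sub_mul, _root_.map_mul, _root_.map_mul]
    congr 1
    rw [← (hc (RingHom.mapMatrix (C : R →+* R[X]) U)).eq, Matrix.mul_assoc, ← RingHom.map_mul, hUV]
    simp
  rw [key, det_mul, det_mul, mul_comm, ← mul_assoc, ← det_mul, ← RingHom.map_mul, hVU]
  simp

open Matrix in
lemma aux_trace_pow_conj {n R : Type*} [Fintype n] [DecidableEq n] [CommRing R]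
    (U M V : Matrix n n R) (hVU : V * U = 1) (k : ℕ) :
    ((U * M * V) ^ (k+1)).trace = (M ^ (k+1)).trace := by
  have h : ∀ j : ℕ, (U * M * V) ^ (j+1) = U * M ^ (j+1) * V := by
    intro j
    induction j with
    | zero => simp
    | succ j ihj =>
        rw [pow_succ, ihj, pow_succ, pow_succ]
        simp only [Matrix.mul_assoc]
        rw [← Matrix.mul_assoc V U, hVU, Matrix.one_mul]
        simp only [Matrix.mul_assoc, pow_succ]
  rw [h, Matrix.trace_mul_comm, ← Matrix.mul_assoc, hVU, Matrix.one_mul]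

open Matrix Polynomial in
lemma aux_charmatrix_diagonal {n : Type*} [Fintype n] [DecidableEq n] (d : n → ℝ) :
    charmatrix (diagonal d) = diagonal (fun i => (X : ℝ[X]) - C (d i)) := by
  ext i j
  by_cases hij : i = j
  · subst hij; simp [charmatrix_apply, diagonal_apply_eq]
  · simp [charmatrix_apply_ne _ _ _ hij, diagonal_apply_ne _ hij]

open Matrix Polynomial in
lemma aux_spectral {n : Type*} [Fintype n] [DecidableEq n]
    {A : Matrix n n ℝ} (hA : A.IsHermitian) :
    A = (hA.eigenvectorUnitary : Matrix n n ℝ) * diagonal hA.eigenvalues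
      * star (hA.eigenvectorUnitary : Matrix n n ℝ) := by
  have := hA.spectral_theorem
  simpa [RCLike.ofReal_real_eq_id, Function.comp] using this

open Matrix Polynomial in
lemma aux_charpoly_eq_prod {n : Type*} [Fintype n] [DecidableEq n]
    {A : Matrix n n ℝ} (hA : A.IsHermitian) :
    A.charpoly = ∏ i, ((X : ℝ[X]) - C (hA.eigenvalues i)) := by
  set U := (hA.eigenvectorUnitary : Matrix n n ℝ) with hUdef
  have h1 : U * star U = 1 := (hA.eigenvectorUnitary).2.2
  have h2 : star U * U = 1 := (hA.eigenvectorUnitary).2.1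
  rw [(by rw [← aux_spectral hA] : (U * diagonal hA.eigenvalues * star U).charpoly = A.charpoly).symm,
    aux_charpoly_conj _ _ _ h1 h2]
  unfold Matrix.charpoly
  rw [aux_charmatrix_diagonal, det_diagonal]

open Matrix Polynomial in
lemma aux_trace_pow_eq_sum {n : Type*} [Fintype n] [DecidableEq n]
    {A : Matrix n n ℝ} (hA : A.IsHermitian) (k : ℕ) :
    (A ^ (k+1)).trace = ∑ i, hA.eigenvalues i ^ (k+1) := by
  set U := (hA.eigenvectorUnitary : Matrix n n ℝ) with hUdef
  have h2 : star U * U = 1 := (hA.eigenvectorUnitary).2.1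
  conv_lhs => rw [aux_spectral hA]
  rw [aux_trace_pow_conj _ _ _ h2, diagonal_pow, trace_diagonal]
  simp

open MvPolynomial Finset in
lemma aux_esymm_eq_of_psum {n : ℕ} (w w' : Fin n → ℝ)
    (h : ∀ k, 0 < k → ∑ i, w i ^ k = ∑ i, w' i ^ k) (k : ℕ) :
    MvPolynomial.aeval w (MvPolynomial.esymm (Fin n) ℝ k) =
    MvPolynomial.aeval w' (MvPolynomial.esymm (Fin n) ℝ k) := by
  induction k using Nat.strong_induction_on with
  | _ k ih =>
    rcases Nat.eq_zero_or_pos k with rfl | hk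
    · simp
    · have hpsum : ∀ m, aeval w (psum (Fin n) ℝ m) = aeval w' (psum (Fin n) ℝ m) := by
        intro m
        rcases Nat.eq_zero_or_pos m with rfl | hm
        · simp [psum_zero]
        · simpa [psum] using h m hm
      have h1 := congrArg (aeval w) (MvPolynomial.mul_esymm_eq_sum (Fin n) ℝ k)
      have h2 := congrArg (aeval w') (MvPolynomial.mul_esymm_eq_sum (Fin n) ℝ k)
      simp only [map_mul, map_sum, map_pow, map_neg, map_one, map_natCast] at h1 h2
      have hsum : ∑ a ∈ antidiagonal k with a.1 < k,
            (-1:ℝ) ^ a.1 * aeval w (esymm (Fin n) ℝ a.1) * aeval w (psum (Fin n) ℝ a.2)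
          = ∑ a ∈ antidiagonal k with a.1 < k,
            (-1:ℝ) ^ a.1 * aeval w' (esymm (Fin n) ℝ a.1) * aeval w' (psum (Fin n) ℝ a.2) := by
        refine Finset.sum_congr rfl ?_
        intro a ha
        simp only [Finset.mem_filter] at ha
        rw [ih a.1 ha.2, hpsum a.2]
      have : (k:ℝ) * aeval w (esymm (Fin n) ℝ k) = (k:ℝ) * aeval w' (esymm (Fin n) ℝ k) := by
        rw [h1, h2, hsum]
      exact mul_left_cancel₀ (Nat.cast_ne_zero.mpr hk.ne') this

open Matrix Polynomial in
lemma aux_prod_eq_of_esymm {n : ℕ} (w w' : Fin n → ℝ)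
    (h : ∀ k, MvPolynomial.aeval w (MvPolynomial.esymm (Fin n) ℝ k) =
      MvPolynomial.aeval w' (MvPolynomial.esymm (Fin n) ℝ k)) :
    ∏ i, ((X : ℝ[X]) + C (w i)) = ∏ i, ((X : ℝ[X]) + C (w' i)) := by
  have key : ∀ v : Fin n → ℝ, ∏ i, ((X : ℝ[X]) + C (v i)) =
      ∑ j ∈ Finset.range (n + 1),
        C (MvPolynomial.aeval v (MvPolynomial.esymm (Fin n) ℝ j)) * X ^ (n - j) := by
    intro v
    have h1 : ∏ i, ((X : ℝ[X]) + C (v i)) =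
        ((Finset.univ.val.map v).map fun r => (X : ℝ[X]) + C r).prod := by
      rw [Multiset.map_map]
      rfl
    have hcv : Multiset.card (Finset.univ.val : Multiset (Fin n)) = n := by
      simp
    rw [h1, Multiset.prod_X_add_C_eq_sum_esymm]
    simp only [Multiset.card_map, hcv]
    refine Finset.sum_congr rfl fun j _ => ?_
    rw [MvPolynomial.aeval_esymm_eq_multiset_esymm]
  rw [key, key]
  exact Finset.sum_congr rfl fun j _ => by rw [h j]

open MvPolynomial in
lemma aux_prod_eq_of_psum {n : ℕ} (w w' : Fin n → ℝ)
    (h : ∀ k, 0 < k → ∑ i, w i ^ k = ∑ i, w' i ^ k) :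
    ∏ i, ((Polynomial.X : Polynomial ℝ) + Polynomial.C (w i)) =
    ∏ i, ((Polynomial.X : Polynomial ℝ) + Polynomial.C (w' i)) :=
  aux_prod_eq_of_esymm w w' (aux_esymm_eq_of_psum w w' h)

open Matrix Polynomial in
lemma aux_charpoly_eq_of_trace {V V' : Type*} [Fintype V] [Fintype V']
    [DecidableEq V] [DecidableEq V']
    (A : Matrix V V ℝ) (B : Matrix V' V' ℝ) (hA : A.IsHermitian) (hB : B.IsHermitian)
    (hcard : Fintype.card V = Fintype.card V')
    (htr : ∀ k : ℕ, (A ^ (k+1)).trace = (B ^ (k+1)).trace) :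
    A.charpoly = B.charpoly := by
  have e : V ≃ Fin (Fintype.card V) := Fintype.equivFin V
  have e' : V' ≃ Fin (Fintype.card V) := (Fintype.equivFin V').trans (finCongr hcard.symm)
  have hps : ∀ k, 0 < k →
      ∑ i : Fin (Fintype.card V), (-(hA.eigenvalues (e.symm i))) ^ k
        = ∑ i : Fin (Fintype.card V), (-(hB.eigenvalues (e'.symm i))) ^ k := by
    intro k hk
    obtain ⟨j, rfl⟩ : ∃ j, k = j + 1 := ⟨k - 1, (Nat.succ_pred_eq_of_pos hk).symm⟩
    rw [Equiv.sum_comp e.symm (fun v => (-(hA.eigenvalues v)) ^ (j+1)),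
      Equiv.sum_comp e'.symm (fun v => (-(hB.eigenvalues v)) ^ (j+1))]
    rw [Finset.sum_congr rfl fun v _ => neg_pow (hA.eigenvalues v) (j+1),
      Finset.sum_congr rfl fun v _ => neg_pow (hB.eigenvalues v) (j+1),
      ← Finset.mul_sum, ← Finset.mul_sum, ← aux_trace_pow_eq_sum hA,
      ← aux_trace_pow_eq_sum hB, htr]
  have hprod := aux_prod_eq_of_psum _ _ hps
  rw [aux_charpoly_eq_prod hA, aux_charpoly_eq_prod hB,
    ← Equiv.prod_comp e.symm (fun v => (X : ℝ[X]) - C (hA.eigenvalues v)),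
    ← Equiv.prod_comp e'.symm (fun v => (X : ℝ[X]) - C (hB.eigenvalues v))]
  simpa only [sub_eq_add_neg, ← map_neg C] using hprod

/-- walk-count extractor from a 2-WL color -/
noncomputable def WLF : (s : ℕ) → WLColor 2 s → ℕ
  | 0, c => if (c : Tp 2).1 0 1 then 1 else 0
  | s + 1, c => ((c : Multiset (Tp 3 × (Fin 2 → WLColor 2 s))).map
      fun p => if p.1.2 0 2 then WLF s (p.2 0) else 0).sum

lemma WLF_eq {V : Type*} [Fintype V] [DecidableEq V] (G : SimpleGraph V)
    [DecidableRel G.Adj] : ∀ (s : ℕ) (x : Fin 2 → V),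
    WLF s (WL G 2 s x) = ((G.adjMatrix ℕ) ^ s) (x 0) (x 1) := by
  intro s
  induction s with
  | zero =>
      intro x
      by_cases h : x 0 = x 1 <;> simp [WL, tp, WLF, Matrix.one_apply, h]
  | succ s ih =>
      intro x
      show ((Multiset.map _ (Multiset.map _ Finset.univ.val)).sum = _)
      rw [Multiset.map_map]
      have hterm : ∀ m : V,
          (if (tp G (Fin.snoc x m)).2 0 2 then WLF s (WL G 2 s (Function.update x 0 m)) else 0)
            = (G.adjMatrix ℕ) (x 0) m * ((G.adjMatrix ℕ) ^ s) m (x 1) := by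
        intro m
        have h02 : (tp G (Fin.snoc x m)).2 0 2 = G.Adj (x 0) m := by
          show G.Adj ((Fin.snoc x m : Fin 3 → V) 0) ((Fin.snoc x m : Fin 3 → V) 2) = G.Adj (x 0) m
          congr 1
        have hupd : WLF s (WL G 2 s (Function.update x 0 m))
            = ((G.adjMatrix ℕ) ^ s) m (x 1) := by
          rw [ih]
          simp
        rw [h02, hupd, SimpleGraph.adjMatrix_apply]
        by_cases h : G.Adj (x 0) m <;> simp [h]
      calc (Multiset.map (fun m : V =>
              if (tp G (Fin.snoc x m)).2 0 2 then WLF s (WL G 2 s (Function.update x 0 m)) else 0)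
            Finset.univ.val).sum
          = ∑ m : V, (G.adjMatrix ℕ) (x 0) m * ((G.adjMatrix ℕ) ^ s) m (x 1) := by
            rw [Finset.sum]
            exact congrArg Multiset.sum (Multiset.map_congr rfl fun m _ => hterm m)
        _ = ((G.adjMatrix ℕ) ^ (s+1)) (x 0) (x 1) := by
            rw [pow_succ', Matrix.mul_apply]

noncomputable def WLg (s : ℕ) (c : WLColor 2 (s+1)) : ℕ :=
  let c' : Multiset (Tp 3 × (Fin 2 → WLColor 2 s)) := c
  if ∃ p ∈ c', p.1.1 0 1 then WLF (s+1) c else 0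

lemma WLg_trace {V : Type*} [Fintype V] [DecidableEq V] (G : SimpleGraph V)
    [DecidableRel G.Adj] (s : ℕ) :
    ((Finset.univ.val.map fun x : Fin 2 → V => WL G 2 (s+1) x).map (WLg s)).sum
      = Matrix.trace ((G.adjMatrix ℕ) ^ (s+1)) := by
  rw [Multiset.map_map]
  have hx : ∀ x : Fin 2 → V, WLg s (WL G 2 (s+1) x)
      = if x 0 = x 1 then ((G.adjMatrix ℕ)^(s+1)) (x 0) (x 1) else 0 := by
    intro x
    have hWL : WL G 2 (s+1) x = (Finset.univ.val.map fun m : V =>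
        (tp G (Fin.snoc x m), fun t => WL G 2 s (Function.update x t m))
          : Multiset (Tp 3 × (Fin 2 → WLColor 2 s))) := rfl
    have hcond : (∃ p ∈ (Finset.univ.val.map fun m : V =>
        (tp G (Fin.snoc x m), fun t => WL G 2 s (Function.update x t m))
          : Multiset (Tp 3 × (Fin 2 → WLColor 2 s))), p.1.1 0 1) ↔ x 0 = x 1 := by
      constructor
      · rintro ⟨p, hp, hpe⟩
        obtain ⟨m, hm, rfl⟩ := Multiset.mem_map.mp hp
        have h01 : (Fin.snoc x m : Fin 3 → V) 0 = (Fin.snoc x m : Fin 3 → V) 1 := hpe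
        simpa [Fin.snoc] using h01
      · intro hxe
        refine ⟨_, Multiset.mem_map.mpr ⟨x 0, Finset.mem_univ_val _, rfl⟩, ?_⟩
        show (Fin.snoc x (x 0) : Fin 3 → V) 0 = (Fin.snoc x (x 0) : Fin 3 → V) 1
        simpa [Fin.snoc] using hxe
    have hrfl : WLg s (WL G 2 (s+1) x) = if ∃ p ∈ (Finset.univ.val.map fun m : V =>
        (tp G (Fin.snoc x m), fun t => WL G 2 s (Function.update x t m))
          : Multiset (Tp 3 × (Fin 2 → WLColor 2 s))), p.1.1 0 1
        then WLF (s+1) (WL G 2 (s+1) x) else 0 := rfl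
    rw [hrfl, if_congr hcond rfl rfl, WLF_eq G (s+1) x]
  have hmc : Multiset.map (WLg s ∘ fun x : Fin 2 → V => WL G 2 (s+1) x) Finset.univ.val
      = Multiset.map (fun x : Fin 2 → V =>
          if x 0 = x 1 then ((G.adjMatrix ℕ)^(s+1)) (x 0) (x 1) else 0) Finset.univ.val :=
    Multiset.map_congr rfl fun x _ => hx x
  rw [hmc]
  have hfs : (Multiset.map (fun x : Fin 2 → V =>
      if x 0 = x 1 then ((G.adjMatrix ℕ)^(s+1)) (x 0) (x 1) else 0) Finset.univ.val).sum
      = ∑ x : Fin 2 → V, if x 0 = x 1 then ((G.adjMatrix ℕ)^(s+1)) (x 0) (x 1) else 0 := rfl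
  rw [hfs, ← Equiv.sum_comp (finTwoArrowEquiv V).symm
    (fun x : Fin 2 → V => if x 0 = x 1 then ((G.adjMatrix ℕ)^(s+1)) (x 0) (x 1) else 0),
    Fintype.sum_prod_type]
  simp only [finTwoArrowEquiv_symm_apply, Matrix.cons_val_zero, Matrix.cons_val_one,
    Matrix.head_cons]
  rw [Matrix.trace]
  refine Finset.sum_congr rfl fun a _ => ?_
  rw [Finset.sum_ite_eq Finset.univ a (fun b => ((G.adjMatrix ℕ)^(s+1)) a b)]
  simp [Matrix.diag]

lemma aux_trace_cast {W : Type*} [Fintype W] [DecidableEq W] (K : SimpleGraph W)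
    [DecidableRel K.Adj] (k : ℕ) :
    ((K.adjMatrix ℝ) ^ (k+1)).trace
      = ((Matrix.trace ((K.adjMatrix ℕ) ^ (k+1)) : ℕ) : ℝ) := by
  have hmap : (Nat.castRingHom ℝ).mapMatrix (K.adjMatrix ℕ) = K.adjMatrix ℝ := by
    ext i j
    by_cases hij : K.Adj i j <;> simp [hij]
  rw [← hmap, ← map_pow]
  simp [Matrix.trace, Matrix.diag]

/-- If in every round the multisets of 2-dimensional Weisfeiler-Lehman
colors of all pairs of vertices of `G` and of `H` coincide, then `G` and `H` are
cospectral. -/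
theorem cospectral_of_WL2_multisets_eq
    {V V' : Type*} [Fintype V] [Fintype V'] [DecidableEq V] [DecidableEq V']
    (G : SimpleGraph V) (H : SimpleGraph V')
    [DecidableRel G.Adj] [DecidableRel H.Adj]
    (hcard : Fintype.card V = Fintype.card V')
    (h : ∀ r : ℕ,
      (Finset.univ.val.map fun x : Fin 2 → V => WL G 2 r x) =
      (Finset.univ.val.map fun x : Fin 2 → V' => WL H 2 r x)) :
    (G.adjMatrix ℝ).charpoly = (H.adjMatrix ℝ).charpoly := by
  have hermG : (G.adjMatrix ℝ).IsHermitian := by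
    unfold Matrix.IsHermitian
    ext i j
    simp [Matrix.conjTranspose_apply, G.adj_comm i j]
  have hermH : (H.adjMatrix ℝ).IsHermitian := by
    unfold Matrix.IsHermitian
    ext i j
    simp [Matrix.conjTranspose_apply, H.adj_comm i j]
  have htrN : ∀ s : ℕ, Matrix.trace ((G.adjMatrix ℕ) ^ (s+1))
      = Matrix.trace ((H.adjMatrix ℕ) ^ (s+1)) := by
    intro s
    rw [← WLg_trace G s, ← WLg_trace H s, h (s+1)]
  have htrR : ∀ k : ℕ, ((G.adjMatrix ℝ) ^ (k+1)).trace = ((H.adjMatrix ℝ) ^ (k+1)).trace := by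
    intro k
    rw [aux_trace_cast G k, aux_trace_cast H k, htrN k]
  exact aux_charpoly_eq_of_trace _ _ hermG hermH hcard htrR
end

section
/- Let G and H be graphs and let W^r_{G,2k} denote the r-th round 2k-dimensional Weisfeiler-Lehman coloring. If W^r_{G,2k}(i₁...i_k j₁...j_k) = W^r_{H,2k}(p₁...p_k q₁...q_k), then A_{G^k}^r(i₁...i_k, j₁...j_k) = A_{H^k}^r(p₁...p_k, q₁...q_k), where G^k and H^k are the k-th powers. -/
attribute [local instance] Classical.propDecidable

/-- The k-th power of a graph: vertices are k-tuples, two tuples adjacent iff they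
agree in all but one coordinate, at which the entries are adjacent in `G`. -/
def graphPow {V : Type*} (G : SimpleGraph V) (k : ℕ) : SimpleGraph (Fin k → V) where
  Adj x y := ∃ u, G.Adj (x u) (y u) ∧ ∀ l, l ≠ u → x l = y l
  symm := by
    constructor
    rintro x y ⟨u, h, he⟩
    exact ⟨u, h.symm, fun l hl => (he l hl).symm⟩
  loopless := by
    constructor
    rintro x ⟨u, h, -⟩
    exact G.ne_of_adj h rfl

/-! ### Auxiliary lemmas -/

lemma upd_append_left {V : Type*} {k : ℕ} (i j : Fin k → V) (u : Fin k) (m : V) :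
    Function.update (Fin.append i j) (Fin.castAdd k u) m
      = Fin.append (Function.update i u m) j := by
  funext t
  refine Fin.addCases (fun a => ?_) (fun a => ?_) t
  · rcases eq_or_ne a u with rfl | hne
    · simp
    · rw [Function.update_of_ne (fun hh => hne (Fin.castAdd_injective _ _ hh)),
        Fin.append_left, Fin.append_left, Function.update_of_ne hne]
  · rw [Function.update_of_ne (by simp [Fin.ext_iff]; omega), Fin.append_right, Fin.append_right]

lemma adj_of_tp_eq {V V' : Type*} (G : SimpleGraph V) (H : SimpleGraph V') {k : ℕ}
    (i j : Fin k → V) (p q : Fin k → V')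
    (h : tp G (Fin.append i j) = tp H (Fin.append p q)) :
    (graphPow G k).Adj i j → (graphPow H k).Adj p q := by
  have h1 := congrArg Prod.fst h
  have h2 := congrArg Prod.snd h
  simp only [tp] at h1 h2
  rintro ⟨u, ha, he⟩
  refine ⟨u, ?_, ?_⟩
  · have := congrFun (congrFun h2 (Fin.castAdd k u)) (Fin.natAdd k u)
    simp only [Fin.append_left, Fin.append_right] at this
    exact this ▸ ha
  · intro l hl
    have := congrFun (congrFun h1 (Fin.castAdd k l)) (Fin.natAdd k l)
    simp only [Fin.append_left, Fin.append_right] at this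
    exact this ▸ he l hl

lemma sum_adj {V : Type*} [Fintype V] [DecidableEq V] (G : SimpleGraph V) (k : ℕ)
    (i : Fin k → V) (X : (Fin k → V) → ℝ) :
    (∑ m : Fin k → V, (if (graphPow G k).Adj i m then (1:ℝ) else 0) * X m)
      = ∑ pr : Fin k × V,
          (if G.Adj (i pr.1) pr.2 then (1:ℝ) else 0) * X (Function.update i pr.1 pr.2) := by
  simp only [ite_mul, one_mul, zero_mul]
  rw [← Finset.sum_filter, ← Finset.sum_filter]
  refine (Finset.sum_bij (fun pr _ => Function.update i pr.1 pr.2) ?_ ?_ ?_ ?_).symm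
  · rintro ⟨u, m⟩ hm
    simp only [Finset.mem_filter, Finset.mem_univ, true_and] at hm ⊢
    exact ⟨u, by simpa using hm, fun l hl => by rw [Function.update_of_ne hl]⟩
  · rintro ⟨u, m⟩ hu ⟨u', m'⟩ hu' hEq
    simp only [Finset.mem_filter, Finset.mem_univ, true_and] at hu hu'
    dsimp only at hEq
    rcases eq_or_ne u u' with rfl | hne
    · have := congrFun hEq u
      simp at this
      simp [this]
    · exfalso
      have := congrFun hEq u
      rw [Function.update_self, Function.update_of_ne hne] at this
      exact G.loopless.irrefl _ (this ▸ hu)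
  · intro m hm
    simp only [Finset.mem_filter, Finset.mem_univ, true_and] at hm
    obtain ⟨u, ha, he⟩ := hm
    refine ⟨(u, m u), by simpa using ha, ?_⟩
    funext l
    dsimp only
    rcases eq_or_ne l u with rfl | hl
    · simp
    · rw [Function.update_of_ne hl]; exact he l hl
  · rintro ⟨u, m⟩ hm
    rfl

noncomputable def FAux (k r : ℕ) (f : WLColor (k + k) r → ℝ)
    (s : Tp (k + k + 1) × (Fin (k + k) → WLColor (k + k) r)) : ℝ :=
  ∑ u : Fin k,
    (if s.1.2 (Fin.castSucc (Fin.castAdd k u)) (Fin.last (k + k)) then (1:ℝ) else 0)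
      * f (s.2 (Fin.castAdd k u))

lemma chain_lemma {V : Type*} [Fintype V] [DecidableEq V] (G : SimpleGraph V) (k r : ℕ)
    (f : WLColor (k + k) r → ℝ)
    (hf : ∀ i' j' : Fin k → V,
      f (WL G (k + k) r (Fin.append i' j'))
        = (((graphPow G k).adjMatrix ℝ) ^ (r + 1)) i' j')
    (i j : Fin k → V) :
    (((graphPow G k).adjMatrix ℝ) ^ (r + 1 + 1)) i j
      = ((WL G (k + k) (r + 1) (Fin.append i j)).map (FAux k r f)).sum := by
  rw [pow_succ', Matrix.mul_apply]
  calc ∑ m : Fin k → V, (graphPow G k).adjMatrix ℝ i m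
          * (((graphPow G k).adjMatrix ℝ) ^ (r + 1)) m j
      = ∑ m : Fin k → V, (if (graphPow G k).Adj i m then (1:ℝ) else 0)
          * (((graphPow G k).adjMatrix ℝ) ^ (r + 1)) m j := by
        simp only [SimpleGraph.adjMatrix_apply]
    _ = ∑ pr : Fin k × V, (if G.Adj (i pr.1) pr.2 then (1:ℝ) else 0)
          * (((graphPow G k).adjMatrix ℝ) ^ (r + 1)) (Function.update i pr.1 pr.2) j :=
        sum_adj G k i _
    _ = ∑ m : V, ∑ u : Fin k, (if G.Adj (i u) m then (1:ℝ) else 0)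
          * (((graphPow G k).adjMatrix ℝ) ^ (r + 1)) (Function.update i u m) j := by
        rw [Fintype.sum_prod_type]; exact Finset.sum_comm
    _ = ∑ m : V, FAux k r f
          (tp G (Fin.snoc (Fin.append i j) m),
            fun t => WL G (k + k) r (Function.update (Fin.append i j) t m)) := by
        refine Finset.sum_congr rfl fun m _ => ?_
        unfold FAux
        refine Finset.sum_congr rfl fun u _ => ?_
        simp only [tp, Fin.snoc_castSucc, Fin.snoc_last, Fin.append_left]
        rw [upd_append_left, hf]
    _ = ((WL G (k + k) (r + 1) (Fin.append i j)).map (FAux k r f)).sum := by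
        show _ = ((Finset.univ.val.map _).map (FAux k r f)).sum
        rw [Multiset.map_map]
        rfl

noncomputable def fAux {V V' : Type*} [Fintype V] [Fintype V'] [DecidableEq V] [DecidableEq V']
    (G : SimpleGraph V) (H : SimpleGraph V') (k r : ℕ) (c : WLColor (k + k) r) : ℝ :=
  if h : ∃ x : (Fin k → V) × (Fin k → V), WL G (k + k) r (Fin.append x.1 x.2) = c then
    (((graphPow G k).adjMatrix ℝ) ^ (r + 1)) h.choose.1 h.choose.2
  else if h' : ∃ y : (Fin k → V') × (Fin k → V'), WL H (k + k) r (Fin.append y.1 y.2) = c then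
    (((graphPow H k).adjMatrix ℝ) ^ (r + 1)) h'.choose.1 h'.choose.2
  else 0

set_option maxHeartbeats 800000 in
theorem aux_single (r : ℕ) :
    ∀ {V : Type u} [Fintype V] [DecidableEq V]
      (G H : SimpleGraph V) (k : ℕ)
      (i j p q : Fin k → V),
      WL G (k + k) r (Fin.append i j) = WL H (k + k) r (Fin.append p q) →
      (((graphPow G k).adjMatrix ℝ) ^ (r + 1)) i j =
        (((graphPow H k).adjMatrix ℝ) ^ (r + 1)) p q := by
  induction r with
  | zero =>
    intro V _ _ G H k i j p q h
    have h' : tp G (Fin.append i j) = tp H (Fin.append p q) := h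
    rw [pow_one, pow_one, SimpleGraph.adjMatrix_apply, SimpleGraph.adjMatrix_apply]
    by_cases hadj : (graphPow G k).Adj i j
    · rw [if_pos hadj, if_pos (adj_of_tp_eq G H i j p q h' hadj)]
    · rw [if_neg hadj, if_neg (fun hh => hadj (adj_of_tp_eq H G p q i j h'.symm hh))]
  | succ r IH =>
    intro V _ _ G H k i j p q h
    have hfG : ∀ i' j' : Fin k → V,
        fAux G H k r (WL G (k + k) r (Fin.append i' j'))
          = (((graphPow G k).adjMatrix ℝ) ^ (r + 1)) i' j' := by
      intro i' j'
      unfold fAux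
      have hex : ∃ x : (Fin k → V) × (Fin k → V),
          WL G (k + k) r (Fin.append x.1 x.2) = WL G (k + k) r (Fin.append i' j') :=
        ⟨(i', j'), rfl⟩
      rw [dif_pos hex]
      exact IH G G k _ _ i' j' hex.choose_spec
    have hfH : ∀ p' q' : Fin k → V,
        fAux G H k r (WL H (k + k) r (Fin.append p' q'))
          = (((graphPow H k).adjMatrix ℝ) ^ (r + 1)) p' q' := by
      intro p' q'
      unfold fAux
      by_cases h1 : ∃ x : (Fin k → V) × (Fin k → V),
          WL G (k + k) r (Fin.append x.1 x.2) = WL H (k + k) r (Fin.append p' q')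
      · rw [dif_pos h1]
        exact IH G H k _ _ p' q' h1.choose_spec
      · have hex : ∃ y : (Fin k → V) × (Fin k → V),
            WL H (k + k) r (Fin.append y.1 y.2) = WL H (k + k) r (Fin.append p' q') :=
          ⟨(p', q'), rfl⟩
        rw [dif_neg h1, dif_pos hex]
        exact IH H H k _ _ p' q' hex.choose_spec
    rw [chain_lemma G k r (fAux G H k r) hfG i j,
        chain_lemma H k r (fAux G H k r) hfH p q, h]

set_option maxHeartbeats 800000 in
theorem aux_main (r : ℕ) :
    ∀ {V : Type u} {V' : Type v} [Fintype V] [Fintype V'] [DecidableEq V] [DecidableEq V']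
      (G : SimpleGraph V) (H : SimpleGraph V') (k : ℕ)
      (i j : Fin k → V) (p q : Fin k → V'),
      WL G (k + k) r (Fin.append i j) = WL H (k + k) r (Fin.append p q) →
      (((graphPow G k).adjMatrix ℝ) ^ (r + 1)) i j =
        (((graphPow H k).adjMatrix ℝ) ^ (r + 1)) p q := by
  induction r with
  | zero =>
    intro V V' _ _ _ _ G H k i j p q h
    have h' : tp G (Fin.append i j) = tp H (Fin.append p q) := h
    rw [pow_one, pow_one, SimpleGraph.adjMatrix_apply, SimpleGraph.adjMatrix_apply]
    by_cases hadj : (graphPow G k).Adj i j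
    · rw [if_pos hadj, if_pos (adj_of_tp_eq G H i j p q h' hadj)]
    · rw [if_neg hadj, if_neg (fun hh => hadj (adj_of_tp_eq H G p q i j h'.symm hh))]
  | succ r IH =>
    intro V V' _ _ _ _ G H k i j p q h
    have hfG : ∀ i' j' : Fin k → V,
        fAux G H k r (WL G (k + k) r (Fin.append i' j'))
          = (((graphPow G k).adjMatrix ℝ) ^ (r + 1)) i' j' := by
      intro i' j'
      unfold fAux
      have hex : ∃ x : (Fin k → V) × (Fin k → V),
          WL G (k + k) r (Fin.append x.1 x.2) = WL G (k + k) r (Fin.append i' j') :=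
        ⟨(i', j'), rfl⟩
      rw [dif_pos hex]
      exact aux_single r G G k _ _ i' j' hex.choose_spec
    have hfH : ∀ p' q' : Fin k → V',
        fAux G H k r (WL H (k + k) r (Fin.append p' q'))
          = (((graphPow H k).adjMatrix ℝ) ^ (r + 1)) p' q' := by
      intro p' q'
      unfold fAux
      by_cases h1 : ∃ x : (Fin k → V) × (Fin k → V),
          WL G (k + k) r (Fin.append x.1 x.2) = WL H (k + k) r (Fin.append p' q')
      · rw [dif_pos h1]
        exact IH G H k _ _ p' q' h1.choose_spec
      · have hex : ∃ y : (Fin k → V') × (Fin k → V'),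
            WL H (k + k) r (Fin.append y.1 y.2) = WL H (k + k) r (Fin.append p' q') :=
          ⟨(p', q'), rfl⟩
        rw [dif_neg h1, dif_pos hex]
        exact aux_single r H H k _ _ p' q' hex.choose_spec
    rw [chain_lemma G k r (fAux G H k r) hfG i j,
        chain_lemma H k r (fAux G H k r) hfH p q, h]

/-- If the round-`r` 2k-dimensional Weisfeiler-Lehman colors of the
2k-tuples `i₁…i_k j₁…j_k` (in `G`) and `p₁…p_k q₁…q_k` (in `H`) agree, then
`A_{G^k}^r(i₁…i_k, j₁…j_k) = A_{H^k}^r(p₁…p_k, q₁…q_k)` (round index `r` here pairs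
with the matrix power `r+1`, rounds being numbered from 1 in the paper). -/
theorem graphPow_adjMatrix_pow_entry_eq_of_WL2k_eq
    {V V' : Type*} [Fintype V] [Fintype V'] [DecidableEq V] [DecidableEq V']
    (G : SimpleGraph V) (H : SimpleGraph V') (k r : ℕ)
    (i j : Fin k → V) (p q : Fin k → V')
    (h : WL G (k + k) r (Fin.append i j) = WL H (k + k) r (Fin.append p q)) :
    (((graphPow G k).adjMatrix ℝ) ^ (r + 1)) i j =
      (((graphPow H k).adjMatrix ℝ) ^ (r + 1)) p q := by
  exact aux_main r G H k i j p q h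
end

section
/- Let G and H be n-vertex graphs such that the 2k-dimensional Weisfeiler-Lehman algorithm does not distinguish G from H. Then the k-th symmetric powers G^{k} and H^{k} are cospectral. -/
attribute [local instance] Classical.propDecidable

open Polynomial in
lemma aux_charmatrix_conj {m : Type*} [Fintype m] [DecidableEq m]
    (U D V : Matrix m m ℝ) (hUV : U * V = 1) :
    (U * D * V).charpoly = D.charpoly := by
  have key : Matrix.charmatrix (U * D * V) =
      U.map C * Matrix.charmatrix D * V.map C := by
    rw [Matrix.charmatrix, Matrix.charmatrix]
    have h1 : ((C : ℝ →+* ℝ[X]).mapMatrix (U * D * V) : Matrix m m ℝ[X])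
        = U.map C * D.map C * V.map C := by
      simp [RingHom.mapMatrix_apply, Matrix.map_mul]
    rw [h1, mul_sub, sub_mul]
    congr 1
    have hc : U.map C * Matrix.scalar m (X : ℝ[X]) = Matrix.scalar m (X : ℝ[X]) * U.map C :=
      (Matrix.scalar_commute (X : ℝ[X]) (fun r => Commute.all _ _) (U.map C)).symm
    rw [hc, mul_assoc]
    have h2 : (U.map C * V.map C : Matrix m m ℝ[X]) = 1 := by
      rw [← Matrix.map_mul, hUV]; simp
    rw [h2, mul_one]
  have hdet : (U.map C).det * (V.map C).det = 1 := by
    rw [← Matrix.det_mul, ← Matrix.map_mul, hUV]; simp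
  rw [Matrix.charpoly, key, Matrix.det_mul, Matrix.det_mul, Matrix.charpoly]
  ring_nf
  rw [mul_comm ((U.map C).det), mul_assoc, hdet, mul_one]

open Polynomial in
lemma aux_charpoly_diagonal {m : Type*} [Fintype m] [DecidableEq m] (d : m → ℝ) :
    (Matrix.diagonal d).charpoly = ∏ i, (X - C (d i)) := by
  rw [Matrix.charpoly]
  have : Matrix.charmatrix (Matrix.diagonal d) = Matrix.diagonal fun i => X - C (d i) := by
    ext i j
    by_cases hij : i = j
    · subst hij; simp
    · rw [Matrix.charmatrix_apply_ne _ _ _ hij, Matrix.diagonal_apply_ne _ hij,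
        Matrix.diagonal_apply_ne _ hij]
      simp
  rw [this, Matrix.det_diagonal]

open Polynomial in
lemma aux_conj_charpoly {m : Type*} [Fintype m] [DecidableEq m]
    (U : Matrix m m ℝ) (d : m → ℝ) (A : Matrix m m ℝ)
    (hUV : U * star U = 1)
    (hsp : A = U * Matrix.diagonal d * star U) :
    A.charpoly = ∏ i, (X - C (d i)) := by
  rw [hsp, aux_charmatrix_conj _ _ _ hUV, aux_charpoly_diagonal]

lemma aux_conj_trace_pow {m : Type*} [Fintype m] [DecidableEq m]
    (U : Matrix m m ℝ) (d : m → ℝ) (A : Matrix m m ℝ)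
    (hUV : U * star U = 1) (hVU : star U * U = 1)
    (hsp : A = U * Matrix.diagonal d * star U) (L : ℕ) :
    (A ^ L).trace = ∑ i, d i ^ L := by
  have hpow : A ^ L = U * (Matrix.diagonal d) ^ L * star U := by
    induction L with
    | zero => simp [pow_zero, hUV]
    | succ n ih =>
        rw [pow_succ, ih, pow_succ, hsp]
        rw [show U * Matrix.diagonal d ^ n * star U *
            (U * Matrix.diagonal d * star U)
            = U * Matrix.diagonal d ^ n * (star U * U) *
              Matrix.diagonal d * star U by
          simp only [Matrix.mul_assoc], hVU, Matrix.mul_one]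
        simp only [Matrix.mul_assoc]
  rw [hpow, Matrix.trace_mul_cycle, hVU, Matrix.one_mul,
    Matrix.diagonal_pow, Matrix.trace_diagonal]
  simp

open Polynomial in
lemma aux_herm_charpoly {m : Type*} [Fintype m] [DecidableEq m]
    {A : Matrix m m ℝ} (hA : A.IsHermitian) :
    A.charpoly = ∏ i, (X - C (hA.eigenvalues i)) := by
  refine aux_conj_charpoly (hA.eigenvectorUnitary : Matrix m m ℝ) hA.eigenvalues A
    (Matrix.mem_unitaryGroup_iff.mp hA.eigenvectorUnitary.2) ?_
  have hsp := hA.spectral_theorem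
  rwa [RCLike.ofReal_real_eq_id, Function.id_comp] at hsp

lemma aux_herm_trace_pow {m : Type*} [Fintype m] [DecidableEq m]
    {A : Matrix m m ℝ} (hA : A.IsHermitian) (L : ℕ) :
    (A ^ L).trace = ∑ i, hA.eigenvalues i ^ L := by
  refine aux_conj_trace_pow (hA.eigenvectorUnitary : Matrix m m ℝ) hA.eigenvalues A
    (Matrix.mem_unitaryGroup_iff.mp hA.eigenvectorUnitary.2)
    (Matrix.mem_unitaryGroup_iff'.mp hA.eigenvectorUnitary.2) ?_ L
  have hsp := hA.spectral_theorem
  rwa [RCLike.ofReal_real_eq_id, Function.id_comp] at hsp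

open MvPolynomial in
lemma aux_esymm_eval_eq {n : ℕ} (d e : Fin n → ℝ)
    (hp : ∀ L : ℕ, 0 < L → ∑ i, d i ^ L = ∑ i, e i ^ L) (j : ℕ) :
    eval d (esymm (Fin n) ℝ j) = eval e (esymm (Fin n) ℝ j) := by
  induction j using Nat.strong_induction_on with
  | _ j ih =>
    rcases Nat.eq_zero_or_pos j with h0 | hj
    · subst h0; simp [esymm_zero]
    · have hd := congrArg (eval d) (mul_esymm_eq_sum (Fin n) ℝ j)
      have he := congrArg (eval e) (mul_esymm_eq_sum (Fin n) ℝ j)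
      simp only [map_mul, map_natCast, map_pow, map_sum, map_neg, map_one] at hd he
      have key : ∀ a ∈ (Finset.HasAntidiagonal.antidiagonal j).filter (fun a => a.1 < j),
          (-1:ℝ)^a.1 * eval d (esymm (Fin n) ℝ a.1) * eval d (psum (Fin n) ℝ a.2)
          = (-1:ℝ)^a.1 * eval e (esymm (Fin n) ℝ a.1) * eval e (psum (Fin n) ℝ a.2) := by
        intro a ha
        obtain ⟨hmem, hlt⟩ := Finset.mem_filter.mp ha
        have hsum : a.1 + a.2 = j := Finset.HasAntidiagonal.mem_antidiagonal.mp hmem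
        have h2 : 0 < a.2 := by omega
        have hps : eval d (psum (Fin n) ℝ a.2) = eval e (psum (Fin n) ℝ a.2) := by
          simp only [psum, map_sum, map_pow, eval_X]
          exact hp a.2 h2
        rw [ih a.1 hlt, hps]
      rw [Finset.sum_congr rfl key] at hd
      have htrans := hd.trans he.symm
      have hj' : (j : ℝ) ≠ 0 := Nat.cast_ne_zero.mpr hj.ne'
      exact mul_left_cancel₀ hj' htrans

open Polynomial in
lemma aux_prod_X_sub_C_eq {n : ℕ} (d e : Fin n → ℝ)
    (hp : ∀ L : ℕ, 0 < L → ∑ i, d i ^ L = ∑ i, e i ^ L) :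
    ∏ i, (X - C (d i)) = ∏ i, (X - C (e i)) := by
  have hes : ∀ j, (Finset.univ.val.map d).esymm j = (Finset.univ.val.map e).esymm j := by
    intro j
    rw [Finset.esymm_map_val, Finset.esymm_map_val]
    have hd : MvPolynomial.eval d (MvPolynomial.esymm (Fin n) ℝ j)
        = ∑ t ∈ Finset.univ.powersetCard j, t.prod d := by
      simp only [MvPolynomial.esymm, map_sum, MvPolynomial.eval_prod, MvPolynomial.eval_X]
    have he : MvPolynomial.eval e (MvPolynomial.esymm (Fin n) ℝ j)
        = ∑ t ∈ Finset.univ.powersetCard j, t.prod e := by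
      simp only [MvPolynomial.esymm, map_sum, MvPolynomial.eval_prod, MvPolynomial.eval_X]
    rw [← hd, ← he]
    exact aux_esymm_eval_eq d e hp j
  have h1 : ∏ i, (X - C (d i)) = ((Finset.univ.val.map d).map fun t => X - C t).prod := by
    rw [Multiset.map_map]; rfl
  have h2 : ∏ i, (X - C (e i)) = ((Finset.univ.val.map e).map fun t => X - C t).prod := by
    rw [Multiset.map_map]; rfl
  rw [h1, h2, Multiset.prod_X_sub_X_eq_sum_esymm, Multiset.prod_X_sub_X_eq_sum_esymm]
  have hc : Multiset.card (Finset.univ.val.map d) = Multiset.card (Finset.univ.val.map e) := by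
    simp
  rw [hc]
  exact Finset.sum_congr rfl fun j _ => by rw [hes j]

lemma aux_charpoly_eq_of_trace_pow {mG mH : Type*} [Fintype mG] [Fintype mH]
    [DecidableEq mG] [DecidableEq mH]
    (A : Matrix mG mG ℝ) (B : Matrix mH mH ℝ)
    (hA : A.IsHermitian) (hB : B.IsHermitian)
    (hcard : Fintype.card mG = Fintype.card mH)
    (htr : ∀ L : ℕ, 0 < L → (A ^ L).trace = (B ^ L).trace) :
    A.charpoly = B.charpoly := by
  set n := Fintype.card mG with hn
  have eG : mG ≃ Fin n := Fintype.equivFinOfCardEq rfl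
  have eH : mH ≃ Fin n := Fintype.equivFinOfCardEq hcard.symm
  set d : Fin n → ℝ := hA.eigenvalues ∘ eG.symm with hd
  set e : Fin n → ℝ := hB.eigenvalues ∘ eH.symm with he
  have hp : ∀ L : ℕ, 0 < L → ∑ i, d i ^ L = ∑ i, e i ^ L := by
    intro L hL
    have h1 : ∑ i, d i ^ L = ∑ i, hA.eigenvalues i ^ L :=
      Fintype.sum_equiv eG.symm _ _ fun i => rfl
    have h2 : ∑ i, e i ^ L = ∑ i, hB.eigenvalues i ^ L :=
      Fintype.sum_equiv eH.symm _ _ fun i => rfl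
    rw [h1, h2, ← aux_herm_trace_pow hA, ← aux_herm_trace_pow hB]
    exact htr L hL
  rw [aux_herm_charpoly hA, aux_herm_charpoly hB]
  have h1 : ∏ i, (Polynomial.X - Polynomial.C (hA.eigenvalues i)) =
      ∏ i, (Polynomial.X - Polynomial.C (d i)) :=
    (Fintype.prod_equiv eG.symm _ _ fun i => rfl).symm
  have h2 : ∏ i, (Polynomial.X - Polynomial.C (hB.eigenvalues i)) =
      ∏ i, (Polynomial.X - Polynomial.C (e i)) :=
    (Fintype.prod_equiv eH.symm _ _ fun i => rfl).symm
  rw [h1, h2, aux_prod_X_sub_C_eq d e hp]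

/- ### auxiliary definitions -/

def auxSameSet (k : ℕ) (c : Tp (k + k)) : Prop :=
  ∀ j : Fin k, ∃ i : Fin k, c.1 (Fin.castAdd k i) (Fin.natAdd k j)

def auxStepOK (k : ℕ) (τ : Tp (k + k + 1)) (t : Fin k) : Prop :=
  τ.2 (Fin.last (k + k)) ((Fin.castAdd k t).castSucc) ∧
  ∀ i : Fin k, ¬ τ.1 (Fin.last (k + k)) ((Fin.castAdd k i).castSucc)

def auxGoodTp (k : ℕ) (τ : Tp (k + k + 1)) : Prop :=
  (∀ i j : Fin k, τ.1 ((Fin.castAdd k i).castSucc) ((Fin.castAdd k j).castSucc) → i = j) ∧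
  (∀ i j : Fin k, τ.1 ((Fin.natAdd k i).castSucc) ((Fin.natAdd k j).castSucc) → i = j) ∧
  (∀ j : Fin k, ∃ i : Fin k, τ.1 ((Fin.castAdd k i).castSucc) ((Fin.natAdd k j).castSucc))

noncomputable def auxWalkF (k : ℕ) : (r : ℕ) → WLColor (k + k) r → ℕ
  | 0, c => if auxSameSet k c then 1 else 0
  | r + 1, c =>
      (Multiset.map (fun p : Tp (k + k + 1) × (Fin (k + k) → WLColor (k + k) r) =>
        ∑ t : Fin k, if auxStepOK k p.1 t then auxWalkF k r (p.2 (Fin.castAdd k t)) else 0)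
        (c : Multiset (Tp (k + k + 1) × (Fin (k + k) → WLColor (k + k) r)))).sum

noncomputable def auxPhiM (k r : ℕ)
    (c : Multiset (Tp (k + k + 1) × (Fin (k + k) → WLColor (k + k) r))) : ℕ :=
  if ∀ p ∈ c, auxGoodTp k p.1 then auxWalkF k (r + 1) c else 0

noncomputable def auxPhi (k r : ℕ) (c : WLColor (k + k) (r + 1)) : ℕ :=
  auxPhiM k r c

def auxA (k : ℕ) {V : Type*} [DecidableEq V] (x : Fin (k + k) → V) : Finset V :=
  Finset.image (fun i : Fin k => x (Fin.castAdd k i)) Finset.univ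

def auxB (k : ℕ) {V : Type*} [DecidableEq V] (x : Fin (k + k) → V) : Finset V :=
  Finset.image (fun i : Fin k => x (Fin.natAdd k i)) Finset.univ

def auxGood (k : ℕ) {V : Type*} [DecidableEq V] (x : Fin (k + k) → V) : Prop :=
  (Function.Injective fun i : Fin k => x (Fin.castAdd k i)) ∧
  (Function.Injective fun i : Fin k => x (Fin.natAdd k i)) ∧
  auxB k x ⊆ auxA k x

/- ### small lemmas -/

lemma mem_auxA {k : ℕ} {V : Type*} [DecidableEq V] {x : Fin (k + k) → V} {z : V} :
    z ∈ auxA k x ↔ ∃ i : Fin k, x (Fin.castAdd k i) = z := by simp [auxA]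

lemma mem_auxB {k : ℕ} {V : Type*} [DecidableEq V] {x : Fin (k + k) → V} {z : V} :
    z ∈ auxB k x ↔ ∃ i : Fin k, x (Fin.natAdd k i) = z := by simp [auxB]

lemma auxA_card {k : ℕ} {V : Type*} [DecidableEq V] {x : Fin (k + k) → V}
    (h1 : Function.Injective fun i : Fin k => x (Fin.castAdd k i)) :
    (auxA k x).card = k := by
  rw [auxA, Finset.card_image_of_injective _ h1, Finset.card_univ, Fintype.card_fin]

lemma auxB_card {k : ℕ} {V : Type*} [DecidableEq V] {x : Fin (k + k) → V}
    (h2 : Function.Injective fun i : Fin k => x (Fin.natAdd k i)) :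
    (auxB k x).card = k := by
  rw [auxB, Finset.card_image_of_injective _ h2, Finset.card_univ, Fintype.card_fin]

lemma natAdd_ne_castAdd {k : ℕ} (i t : Fin k) : Fin.natAdd k i ≠ Fin.castAdd k t := by
  intro hc
  have := congrArg Fin.val hc
  simp only [Fin.coe_natAdd, Fin.coe_castAdd] at this
  omega

lemma auxB_update {k : ℕ} {V : Type*} [DecidableEq V] (x : Fin (k + k) → V)
    (t : Fin k) (m : V) :
    auxB k (Function.update x (Fin.castAdd k t) m) = auxB k x := by
  unfold auxB
  apply Finset.image_congr
  intro i _
  exact Function.update_of_ne (natAdd_ne_castAdd i t) _ _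

lemma auxA_update {k : ℕ} {V : Type*} [DecidableEq V] {x : Fin (k + k) → V}
    (h1 : Function.Injective fun i : Fin k => x (Fin.castAdd k i))
    (t : Fin k) (m : V) (hm : m ∉ auxA k x) :
    auxA k (Function.update x (Fin.castAdd k t) m)
      = insert m ((auxA k x).erase (x (Fin.castAdd k t))) := by
  ext z
  simp only [mem_auxA, Finset.mem_insert, Finset.mem_erase]
  constructor
  · rintro ⟨i, hi⟩
    by_cases hit : i = t
    · subst hit
      rw [Function.update_self] at hi
      exact Or.inl hi.symm
    · rw [Function.update_of_ne (fun hc => hit (by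
        have := congrArg Fin.val hc
        exact Fin.ext (by simpa using this)))] at hi
      refine Or.inr ⟨?_, ⟨i, hi⟩⟩
      intro hz
      exact hit (h1 (hi.trans hz))
  · rintro (rfl | ⟨hz, ⟨i, hi⟩⟩)
    · exact ⟨t, by rw [Function.update_self]⟩
    · have hit : i ≠ t := fun hc => hz (by rw [← hi, hc])
      refine ⟨i, ?_⟩
      rw [Function.update_of_ne (fun hc => hit (by
        have := congrArg Fin.val hc
        exact Fin.ext (by simpa using this)))]
      exact hi

lemma aux_insert_card {k : ℕ} {V : Type*} [DecidableEq V] {x : Fin (k + k) → V}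
    (hA : (auxA k x).card = k) (t : Fin k) {m : V} (hm : m ∉ auxA k x) :
    (insert m ((auxA k x).erase (x (Fin.castAdd k t)))).card = k := by
  have hxa : x (Fin.castAdd k t) ∈ auxA k x := mem_auxA.mpr ⟨t, rfl⟩
  rw [Finset.card_insert_of_notMem (fun hc => hm (Finset.mem_of_mem_erase hc)),
    Finset.card_erase_of_mem hxa, hA]
  have := t.pos
  omega

lemma aux_symmDiff {V : Type*} [DecidableEq V] (A : Finset V) (a m : V)
    (ha : a ∈ A) (hm : m ∉ A) (hne : a ≠ m) :
    symmDiff A (insert m (A.erase a)) = {a, m} := by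
  ext y
  simp only [Finset.mem_symmDiff, Finset.mem_insert, Finset.mem_erase, Finset.mem_singleton]
  by_cases h1 : y = a <;> by_cases h2 : y = m
  · exact absurd (h1.symm.trans h2) hne
  · subst h1; tauto
  · subst h2; tauto
  · tauto

lemma aux_adj_structure {V : Type*} [DecidableEq V] {G : SimpleGraph V} {k : ℕ}
    {A s : Finset V} (hAc : A.card = k) (hsc : s.card = k)
    (hadj : ∃ a b, G.Adj a b ∧ symmDiff A s = {a, b}) :
    ∃ c d, G.Adj c d ∧ A \ s = {c} ∧ s \ A = {d} := by
  obtain ⟨a, b, hab, hsd⟩ := hadj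
  have hne : a ≠ b := hab.ne
  have hc1 : (A \ s).card + (A ∩ s).card = k := by
    rw [Finset.card_sdiff_add_card_inter, hAc]
  have hc2 : (s \ A).card + (A ∩ s).card = k := by
    rw [Finset.inter_comm, Finset.card_sdiff_add_card_inter, hsc]
  have hdisj : Disjoint (A \ s) (s \ A) := by
    apply Finset.disjoint_left.mpr
    intro y hy hy'
    exact (Finset.mem_sdiff.mp hy').2 (Finset.mem_sdiff.mp hy).1
  have hsd' : (A \ s) ∪ (s \ A) = {a, b} := by
    rw [← hsd]; rfl
  have hcard2 : (A \ s).card + (s \ A).card = 2 := by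
    rw [← Finset.card_union_of_disjoint hdisj, hsd', Finset.card_insert_of_notMem (by
      simp [hne]), Finset.card_singleton]
  have h11 : (A \ s).card = 1 ∧ (s \ A).card = 1 := by omega
  obtain ⟨c, hcA⟩ := Finset.card_eq_one.mp h11.1
  obtain ⟨d, hdA⟩ := Finset.card_eq_one.mp h11.2
  have hcmem : c ∈ A \ s := by rw [hcA]; exact Finset.mem_singleton_self c
  have hdmem : d ∈ s \ A := by rw [hdA]; exact Finset.mem_singleton_self d
  have hcd : c ≠ d := by
    intro hcd
    exact (Finset.mem_sdiff.mp hdmem).2 (hcd ▸ (Finset.mem_sdiff.mp hcmem).1)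
  have hcab : c = a ∨ c = b := by
    have : c ∈ ({a, b} : Finset V) := hsd' ▸ Finset.mem_union_left _ hcmem
    simpa using this
  have hdab : d = a ∨ d = b := by
    have : d ∈ ({a, b} : Finset V) := hsd' ▸ Finset.mem_union_right _ hdmem
    simpa using this
  refine ⟨c, d, ?_, hcA, hdA⟩
  rcases hcab with rfl | rfl <;> rcases hdab with rfl | rfl
  · exact absurd rfl hcd
  · exact hab
  · exact hab.symm
  · exact absurd rfl hcd

lemma aux_castAdd_inj {k : ℕ} {i t : Fin k} (h : Fin.castAdd k i = Fin.castAdd k t) : i = t := by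
  have := congrArg Fin.val h
  exact Fin.ext (by simpa using this)

lemma aux_walk {V : Type*} [Fintype V] [DecidableEq V] (G : SimpleGraph V) (k : ℕ) :
    ∀ (r : ℕ) (x : Fin (k + k) → V)
      (h1 : Function.Injective fun i : Fin k => x (Fin.castAdd k i))
      (h2 : Function.Injective fun i : Fin k => x (Fin.natAdd k i))
      (hA : (auxA k x).card = k) (hB : (auxB k x).card = k),
      auxWalkF k r (WL G (k + k) r x)
        = ((symPow G k).adjMatrix ℕ ^ r) ⟨auxA k x, hA⟩ ⟨auxB k x, hB⟩ := by
  intro r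
  induction r with
  | zero =>
      intro x h1 h2 hA hB
      rw [pow_zero]
      show (if auxSameSet k (tp G x) then 1 else 0) = _
      by_cases hss : auxSameSet k (tp G x)
      · have hsub : auxB k x ⊆ auxA k x := by
          intro z hz
          obtain ⟨j, rfl⟩ := mem_auxB.mp hz
          obtain ⟨i, hi⟩ := hss j
          exact mem_auxA.mpr ⟨i, hi⟩
        have heq : auxB k x = auxA k x :=
          Finset.eq_of_subset_of_card_le hsub (by rw [hA, hB])
        have heq' : (⟨auxA k x, hA⟩ : {s : Finset V // s.card = k}) = ⟨auxB k x, hB⟩ :=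
          Subtype.ext heq.symm
        rw [if_pos hss, Matrix.one_apply, if_pos heq']
      · have hne : (⟨auxA k x, hA⟩ : {s : Finset V // s.card = k}) ≠ ⟨auxB k x, hB⟩ := by
          intro hcontra
          apply hss
          intro j
          have hmm : x (Fin.natAdd k j) ∈ auxA k x := by
            have hvv := congrArg Subtype.val hcontra
            simp only at hvv
            rw [hvv]
            exact mem_auxB.mpr ⟨j, rfl⟩
          obtain ⟨i, hi⟩ := mem_auxA.mp hmm
          exact ⟨i, hi⟩
        rw [if_neg hss, Matrix.one_apply, if_neg hne]
  | succ r ih =>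
      intro x h1 h2 hA hB
      -- the walk-sum function on candidate vertex sets
      set w : Finset V → ℕ := fun sset =>
        if h : sset.card = k then
          ((symPow G k).adjMatrix ℕ ^ r) ⟨sset, h⟩ ⟨auxB k x, hB⟩ else 0 with hw
      have hL : auxWalkF k (r + 1) (WL G (k + k) (r + 1) x)
          = ∑ m : V, ∑ t : Fin k,
              if auxStepOK k (tp G (Fin.snoc x m)) t
              then auxWalkF k r (WL G (k + k) r (Function.update x (Fin.castAdd k t) m))
              else 0 := by
        show (Multiset.map _ (Multiset.map _ Finset.univ.val)).sum = _
        rw [Multiset.map_map]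
        rfl
      have hcond : ∀ (m : V) (t : Fin k), auxStepOK k (tp G (Fin.snoc x m)) t ↔
          (G.Adj m (x (Fin.castAdd k t)) ∧ m ∉ auxA k x) := by
        intro m t
        unfold auxStepOK tp
        simp only [Fin.snoc_last, Fin.snoc_castSucc]
        constructor
        · rintro ⟨hadj, hne⟩
          refine ⟨hadj, fun hm => ?_⟩
          obtain ⟨i, hi⟩ := mem_auxA.mp hm
          exact hne i hi.symm
        · rintro ⟨hadj, hm⟩
          exact ⟨hadj, fun i hi => hm (mem_auxA.mpr ⟨i, hi.symm⟩)⟩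
      have hstep : ∀ (m : V) (t : Fin k),
          (if auxStepOK k (tp G (Fin.snoc x m)) t
           then auxWalkF k r (WL G (k + k) r (Function.update x (Fin.castAdd k t) m))
           else 0)
          = (if G.Adj m (x (Fin.castAdd k t)) ∧ m ∉ auxA k x
             then w (insert m ((auxA k x).erase (x (Fin.castAdd k t)))) else 0) := by
        intro m t
        by_cases hc : G.Adj m (x (Fin.castAdd k t)) ∧ m ∉ auxA k x
        · rw [if_pos ((hcond m t).mpr hc), if_pos hc]
          set y := Function.update x (Fin.castAdd k t) m with hy
          have h1' : Function.Injective fun i : Fin k => y (Fin.castAdd k i) := by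
            intro i j hij
            simp only [hy] at hij
            by_cases hit : i = t <;> by_cases hjt : j = t
            · exact hit.trans hjt.symm
            · exfalso
              subst hit
              rw [Function.update_self, Function.update_of_ne
                (fun hcc => hjt (aux_castAdd_inj hcc))] at hij
              exact hc.2 (mem_auxA.mpr ⟨j, hij.symm⟩)
            · exfalso
              subst hjt
              rw [Function.update_self, Function.update_of_ne
                (fun hcc => hit (aux_castAdd_inj hcc))] at hij
              exact hc.2 (mem_auxA.mpr ⟨i, hij⟩)
            · rw [Function.update_of_ne (fun hcc => hit (aux_castAdd_inj hcc)),
                Function.update_of_ne (fun hcc => hjt (aux_castAdd_inj hcc))] at hij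
              exact h1 hij
          have h2' : Function.Injective fun i : Fin k => y (Fin.natAdd k i) := by
            have : (fun i : Fin k => y (Fin.natAdd k i)) = fun i => x (Fin.natAdd k i) := by
              funext i
              exact Function.update_of_ne (natAdd_ne_castAdd i t) _ _
            rw [this]
            exact h2
          have ea : auxA k y = insert m ((auxA k x).erase (x (Fin.castAdd k t))) :=
            auxA_update h1 t m hc.2
          have eb : auxB k y = auxB k x := auxB_update x t m
          rw [ih y h1' h2' (auxA_card h1') (auxB_card h2')]
          simp only [hw]
          have hcC : (insert m ((auxA k x).erase (x (Fin.castAdd k t)))).card = k :=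
            aux_insert_card hA t hc.2
          rw [dif_pos hcC]
          have eA : (⟨auxA k y, auxA_card h1'⟩ : {s : Finset V // s.card = k})
              = ⟨insert m ((auxA k x).erase (x (Fin.castAdd k t))), hcC⟩ := Subtype.ext ea
          have eB : (⟨auxB k y, auxB_card h2'⟩ : {s : Finset V // s.card = k})
              = ⟨auxB k x, hB⟩ := Subtype.ext eb
          rw [eA, eB]
        · rw [if_neg (fun hh => hc ((hcond m t).mp hh)), if_neg hc]
      have hR : ((symPow G k).adjMatrix ℕ ^ (r + 1)) ⟨auxA k x, hA⟩ ⟨auxB k x, hB⟩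
          = ∑ s ∈ Finset.univ.filter
              (fun s : {s : Finset V // s.card = k} => (symPow G k).Adj ⟨auxA k x, hA⟩ s),
              w s.1 := by
        rw [pow_succ', Matrix.mul_apply, Finset.sum_filter]
        apply Finset.sum_congr rfl
        intro s _
        rw [SimpleGraph.adjMatrix_apply]
        by_cases hadj : (symPow G k).Adj ⟨auxA k x, hA⟩ s
        · rw [if_pos hadj, if_pos hadj, one_mul]
          simp only [hw]
          rw [dif_pos s.2]
        · rw [if_neg hadj, if_neg hadj, zero_mul]
      rw [hL, hR]
      have hLL : (∑ m : V, ∑ t : Fin k,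
          if auxStepOK k (tp G (Fin.snoc x m)) t
          then auxWalkF k r (WL G (k + k) r (Function.update x (Fin.castAdd k t) m)) else 0)
          = ∑ p ∈ Finset.univ.filter (fun p : V × Fin k =>
              G.Adj p.1 (x (Fin.castAdd k p.2)) ∧ p.1 ∉ auxA k x),
              w (insert p.1 ((auxA k x).erase (x (Fin.castAdd k p.2)))) := by
        rw [Finset.sum_filter, Fintype.sum_prod_type]
        exact Finset.sum_congr rfl fun m _ => Finset.sum_congr rfl fun t _ => hstep m t
      rw [hLL]
      -- the bijection between admissible (m, t) pairs and neighbours of A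
      apply Finset.sum_bij (i := fun (p : V × Fin k) hp =>
        (⟨insert p.1 ((auxA k x).erase (x (Fin.castAdd k p.2))),
          aux_insert_card hA p.2 ((Finset.mem_filter.mp hp).2).2⟩ : {s : Finset V // s.card = k}))
      · intro p hp
        obtain ⟨-, hadj, hm⟩ := Finset.mem_filter.mp hp
        refine Finset.mem_filter.mpr ⟨Finset.mem_univ _, ?_⟩
        exact ⟨x (Fin.castAdd k p.2), p.1, hadj.symm,
          aux_symmDiff _ _ _ (mem_auxA.mpr ⟨p.2, rfl⟩) hm hadj.ne'⟩
      · intro p hp q hq hpq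
        obtain ⟨-, hpadj, hpm⟩ := Finset.mem_filter.mp hp
        obtain ⟨-, hqadj, hqm⟩ := Finset.mem_filter.mp hq
        have hsets := congrArg Subtype.val hpq
        simp only at hsets
        have hmem : p.1 ∈ insert q.1 ((auxA k x).erase (x (Fin.castAdd k q.2))) := by
          rw [← hsets]; exact Finset.mem_insert_self _ _
        have hm12 : p.1 = q.1 := by
          rcases Finset.mem_insert.mp hmem with h | h
          · exact h
          · exact absurd (Finset.mem_of_mem_erase h) hpm
        have herase : (auxA k x).erase (x (Fin.castAdd k p.2))
            = (auxA k x).erase (x (Fin.castAdd k q.2)) := by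
          have e1 := Finset.erase_insert (a := p.1)
            (s := (auxA k x).erase (x (Fin.castAdd k p.2)))
            (fun hc => hpm (Finset.mem_of_mem_erase hc))
          have e2 := Finset.erase_insert (a := q.1)
            (s := (auxA k x).erase (x (Fin.castAdd k q.2)))
            (fun hc => hqm (Finset.mem_of_mem_erase hc))
          rw [← e1, ← e2]
          rw [hm12] at hsets ⊢
          rw [hsets]
        have hxeq : x (Fin.castAdd k p.2) = x (Fin.castAdd k q.2) := by
          by_contra hne
          have hmem2 : x (Fin.castAdd k p.2) ∈ (auxA k x).erase (x (Fin.castAdd k q.2)) :=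
            Finset.mem_erase.mpr ⟨hne, mem_auxA.mpr ⟨p.2, rfl⟩⟩
          rw [← herase] at hmem2
          exact (Finset.mem_erase.mp hmem2).1 rfl
        have ht : p.2 = q.2 := h1 hxeq
        exact Prod.ext hm12 ht
      · intro s hs
        obtain ⟨-, hadj⟩ := Finset.mem_filter.mp hs
        obtain ⟨c, d, hcd, hcA, hdA⟩ := aux_adj_structure hA s.2 hadj
        have hcmem : c ∈ auxA k x := (Finset.mem_sdiff.mp (hcA ▸ Finset.mem_singleton_self c)).1
        have hcnots : c ∉ s.1 := (Finset.mem_sdiff.mp (hcA ▸ Finset.mem_singleton_self c)).2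
        have hdmem : d ∈ s.1 := (Finset.mem_sdiff.mp (hdA ▸ Finset.mem_singleton_self d)).1
        have hdnotA : d ∉ auxA k x := (Finset.mem_sdiff.mp (hdA ▸ Finset.mem_singleton_self d)).2
        obtain ⟨t, ht⟩ := mem_auxA.mp hcmem
        refine ⟨(d, t), Finset.mem_filter.mpr ⟨Finset.mem_univ _, ?_, hdnotA⟩, ?_⟩
        · rw [ht]; exact hcd.symm
        · apply Subtype.ext
          show insert d ((auxA k x).erase (x (Fin.castAdd k t))) = s.1
          rw [ht]
          ext y
          simp only [Finset.mem_insert, Finset.mem_erase]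
          constructor
          · rintro (rfl | ⟨hyc, hyA⟩)
            · exact hdmem
            · by_contra hys
              have : y ∈ auxA k x \ s.1 := Finset.mem_sdiff.mpr ⟨hyA, hys⟩
              rw [hcA] at this
              exact hyc (Finset.mem_singleton.mp this)
          · intro hys
            by_cases hyA : y ∈ auxA k x
            · refine Or.inr ⟨?_, hyA⟩
              rintro rfl
              exact hcnots hys
            · have : y ∈ s.1 \ auxA k x := Finset.mem_sdiff.mpr ⟨hys, hyA⟩
              rw [hdA] at this
              exact Or.inl (Finset.mem_singleton.mp this)
      · intro p hp
        rfl

def auxJoin (k : ℕ) {V : Type*} (s : Finset V) (uv : (Fin k ↪ ↥s) × (Fin k ↪ ↥s)) :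
    Fin (k + k) → V :=
  fun jj => if hj : (jj : ℕ) < k then (uv.1 ⟨jj, hj⟩ : V)
    else (uv.2 ⟨(jj : ℕ) - k, by have := jj.isLt; omega⟩ : V)

lemma auxJoin_castAdd (k : ℕ) {V : Type*} (s : Finset V)
    (uv : (Fin k ↪ ↥s) × (Fin k ↪ ↥s)) (i : Fin k) :
    auxJoin k s uv (Fin.castAdd k i) = (uv.1 i : V) := by
  have hlt : ((Fin.castAdd k i : Fin (k + k)) : ℕ) < k := by simpa using i.isLt
  have hidx : (⟨((Fin.castAdd k i : Fin (k + k)) : ℕ), hlt⟩ : Fin k) = i :=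
    Fin.ext (by simp)
  unfold auxJoin
  rw [dif_pos hlt]
  exact congrArg (fun z : Fin k => ((uv.1 z : ↥s) : V)) hidx

lemma auxJoin_natAdd (k : ℕ) {V : Type*} (s : Finset V)
    (uv : (Fin k ↪ ↥s) × (Fin k ↪ ↥s)) (i : Fin k) :
    auxJoin k s uv (Fin.natAdd k i) = (uv.2 i : V) := by
  have hlt : ¬ ((Fin.natAdd k i : Fin (k + k)) : ℕ) < k := by simp
  have hidx : (⟨((Fin.natAdd k i : Fin (k + k)) : ℕ) - k,
      by have := (Fin.natAdd k i).isLt; omega⟩ : Fin k) = i :=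
    Fin.ext (by simp)
  unfold auxJoin
  rw [dif_neg hlt]
  exact congrArg (fun z : Fin k => ((uv.2 z : ↥s) : V)) hidx

lemma aux_fiber_card {V : Type*} [Fintype V] [DecidableEq V] (k : ℕ) (s : Finset V)
    (hs : s.card = k) :
    ((Finset.univ : Finset (Fin (k + k) → V)).filter
      (fun x => auxGood k x ∧ auxA k x = s)).card = k.factorial * k.factorial := by
  have hBs : ∀ x : Fin (k + k) → V, auxGood k x → auxA k x = s → auxB k x = s := by
    intro x hg ha
    exact Finset.eq_of_subset_of_card_le (ha ▸ hg.2.2) (by rw [auxB_card hg.2.1, hs])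
  have key : ((Finset.univ : Finset (Fin (k + k) → V)).filter
      (fun x => auxGood k x ∧ auxA k x = s)).card
      = (Finset.univ : Finset ((Fin k ↪ ↥s) × (Fin k ↪ ↥s))).card := by
    apply Finset.card_bij' (i := fun x hx =>
        ((⟨fun i => (⟨x (Fin.castAdd k i), by
            have h := (Finset.mem_filter.mp hx).2
            rw [← h.2]; exact mem_auxA.mpr ⟨i, rfl⟩⟩ : ↥s), fun a b hab => by
            have h := (Finset.mem_filter.mp hx).2
            exact h.1.1 (congrArg Subtype.val hab)⟩ : Fin k ↪ ↥s),
         (⟨fun i => (⟨x (Fin.natAdd k i), by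
            have h := (Finset.mem_filter.mp hx).2
            rw [← hBs x h.1 h.2]; exact mem_auxB.mpr ⟨i, rfl⟩⟩ : ↥s), fun a b hab => by
            have h := (Finset.mem_filter.mp hx).2
            exact h.1.2.1 (congrArg Subtype.val hab)⟩ : Fin k ↪ ↥s)))
      (j := fun uv _ => auxJoin k s uv)
      (hi := fun x hx => Finset.mem_univ _)
      (hj := ?_) (left_inv := ?_) (right_inv := ?_)
    · intro uv _
      refine Finset.mem_filter.mpr ⟨Finset.mem_univ _, ?_, ?_⟩
      · have e1 : (fun i : Fin k => auxJoin k s uv (Fin.castAdd k i))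
            = fun i => (uv.1 i : V) := funext fun i => auxJoin_castAdd k s uv i
        have e2 : (fun i : Fin k => auxJoin k s uv (Fin.natAdd k i))
            = fun i => (uv.2 i : V) := funext fun i => auxJoin_natAdd k s uv i
        have hAeq : auxA k (auxJoin k s uv) = s := by
          unfold auxA
          rw [e1]
          apply Finset.eq_of_subset_of_card_le
          · intro z hz
            obtain ⟨i, -, rfl⟩ := Finset.mem_image.mp hz
            exact (uv.1 i).2
          · rw [Finset.card_image_of_injective _
              (show Function.Injective (fun i : Fin k => ((uv.1 i : ↥s) : V)) from
                fun a b hab => uv.1.injective (Subtype.ext hab)), Finset.card_univ,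
              Fintype.card_fin, hs]
        have hBeq : auxB k (auxJoin k s uv) = s := by
          unfold auxB
          rw [e2]
          apply Finset.eq_of_subset_of_card_le
          · intro z hz
            obtain ⟨i, -, rfl⟩ := Finset.mem_image.mp hz
            exact (uv.2 i).2
          · rw [Finset.card_image_of_injective _
              (show Function.Injective (fun i : Fin k => ((uv.2 i : ↥s) : V)) from
                fun a b hab => uv.2.injective (Subtype.ext hab)), Finset.card_univ,
              Fintype.card_fin, hs]
        refine ⟨?_, ?_, ?_⟩
        · rw [show (fun i : Fin k => auxJoin k s uv (Fin.castAdd k i)) = _ from e1]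
          exact Subtype.coe_injective.comp uv.1.injective
        · rw [show (fun i : Fin k => auxJoin k s uv (Fin.natAdd k i)) = _ from e2]
          exact Subtype.coe_injective.comp uv.2.injective
        · rw [hAeq, hBeq]
      · unfold auxA
        rw [funext fun i => auxJoin_castAdd k s uv i]
        apply Finset.eq_of_subset_of_card_le
        · intro z hz
          obtain ⟨i, -, rfl⟩ := Finset.mem_image.mp hz
          exact (uv.1 i).2
        · rw [Finset.card_image_of_injective _
            (show Function.Injective (fun i : Fin k => ((uv.1 i : ↥s) : V)) from
              fun a b hab => uv.1.injective (Subtype.ext hab)), Finset.card_univ,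
            Fintype.card_fin, hs]
    · intro x hx
      funext jj
      unfold auxJoin
      beta_reduce
      by_cases hlt : (jj : ℕ) < k
      · rw [dif_pos hlt]
        show x (Fin.castAdd k ⟨(jj : ℕ), hlt⟩) = x jj
        congr 1
      · rw [dif_neg hlt]
        show x (Fin.natAdd k ⟨(jj : ℕ) - k, _⟩) = x jj
        congr 1
        refine Fin.ext ?_
        show k + ((jj : ℕ) - k) = (jj : ℕ)
        have := jj.isLt
        omega
    · intro uv _
      refine Prod.ext ?_ ?_
      · apply Function.Embedding.ext
        intro i
        apply Subtype.ext
        show auxJoin k s uv (Fin.castAdd k i) = (uv.1 i : V)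
        exact auxJoin_castAdd k s uv i
      · apply Function.Embedding.ext
        intro i
        apply Subtype.ext
        show auxJoin k s uv (Fin.natAdd k i) = (uv.2 i : V)
        exact auxJoin_natAdd k s uv i
  rw [key, Finset.card_univ, Fintype.card_prod, Fintype.card_embedding_eq,
    Fintype.card_coe, Fintype.card_fin, hs, Nat.descFactorial_self]

lemma aux_trace {V : Type*} [Fintype V] [DecidableEq V] (G : SimpleGraph V) (k r : ℕ) :
    (Multiset.map (fun x : Fin (k + k) → V => auxPhi k r (WL G (k + k) (r + 1) x))
      Finset.univ.val).sum
    = k.factorial * k.factorial * ((symPow G k).adjMatrix ℕ ^ (r + 1)).trace := by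
  have hgood_iff : ∀ x : Fin (k + k) → V,
      (∀ p ∈ (Finset.univ.val.map fun m : V =>
          (tp G (Fin.snoc x m), fun t => WL G (k + k) r (Function.update x t m))),
        auxGoodTp k p.1) ↔ auxGood k x := by
    intro x
    constructor
    · intro hall
      rcases isEmpty_or_nonempty V with hV | hV
      · have hk : k = 0 := by
          by_contra hk0
          exact hV.false (x ⟨0, by omega⟩)
        subst hk
        refine ⟨fun a b _ => Subsingleton.elim a b, fun a b _ => Subsingleton.elim a b, ?_⟩
        intro z hz
        obtain ⟨i, -⟩ := mem_auxB.mp hz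
        exact i.elim0
      · obtain ⟨m0⟩ := hV
        have hmem : (tp G (Fin.snoc x m0), fun t => WL G (k + k) r (Function.update x t m0))
            ∈ (Finset.univ.val.map fun m : V =>
              (tp G (Fin.snoc x m), fun t => WL G (k + k) r (Function.update x t m))) :=
          Multiset.mem_map_of_mem _ (Finset.mem_val.mpr (Finset.mem_univ m0))
        have hgt : auxGoodTp k (tp G (Fin.snoc x m0)) := hall _ hmem
        simp only [auxGoodTp, tp, Fin.snoc_castSucc] at hgt
        obtain ⟨hg1, hg2, hg3⟩ := hgt
        refine ⟨fun a b hab => hg1 a b hab, fun a b hab => hg2 a b hab, ?_⟩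
        intro z hz
        obtain ⟨j, rfl⟩ := mem_auxB.mp hz
        obtain ⟨i, hi⟩ := hg3 j
        exact mem_auxA.mpr ⟨i, hi⟩
    · intro hg p hp
      obtain ⟨m, hm, rfl⟩ := Multiset.mem_map.mp hp
      show auxGoodTp k (tp G (Fin.snoc x m))
      simp only [auxGoodTp, tp, Fin.snoc_castSucc]
      refine ⟨fun a b hab => hg.1 hab, fun a b hab => hg.2.1 hab, fun j => ?_⟩
      obtain ⟨i, hi⟩ := mem_auxA.mp (hg.2.2 (mem_auxB.mpr ⟨j, rfl⟩))
      exact ⟨i, hi⟩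
  set M := (symPow G k).adjMatrix ℕ ^ (r + 1) with hM
  set w2 : Finset V → ℕ := fun sset =>
    if h : sset.card = k then M ⟨sset, h⟩ ⟨sset, h⟩ else 0 with hw2
  have hpoint : ∀ x : Fin (k + k) → V,
      auxPhi k r (WL G (k + k) (r + 1) x)
      = if auxGood k x then w2 (auxA k x) else 0 := by
    intro x
    show auxPhiM k r (Finset.univ.val.map fun m : V =>
        (tp G (Fin.snoc x m), fun t => WL G (k + k) r (Function.update x t m))) = _
    unfold auxPhiM
    by_cases hg : auxGood k x
    · rw [if_pos ((hgood_iff x).mpr hg), if_pos hg]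
      show auxWalkF k (r + 1) (WL G (k + k) (r + 1) x) = _
      rw [aux_walk G k (r + 1) x hg.1 hg.2.1 (auxA_card hg.1) (auxB_card hg.2.1)]
      have hBA : auxB k x = auxA k x :=
        Finset.eq_of_subset_of_card_le hg.2.2 (by rw [auxA_card hg.1, auxB_card hg.2.1])
      have eB : (⟨auxB k x, auxB_card hg.2.1⟩ : {s : Finset V // s.card = k})
          = ⟨auxA k x, auxA_card hg.1⟩ := Subtype.ext hBA
      rw [eB]
      simp only [hw2]
      rw [dif_pos (auxA_card hg.1)]
    · rw [if_neg (fun hh => hg ((hgood_iff x).mp hh)), if_neg hg]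
  have hsum1 : (Multiset.map (fun x : Fin (k + k) → V =>
      auxPhi k r (WL G (k + k) (r + 1) x)) Finset.univ.val).sum
      = ∑ x : Fin (k + k) → V, auxPhi k r (WL G (k + k) (r + 1) x) := rfl
  rw [hsum1, Finset.sum_congr rfl fun x _ => hpoint x, ← Finset.sum_filter]
  have hmaps : ∀ x ∈ (Finset.univ : Finset (Fin (k + k) → V)).filter (auxGood k),
      auxA k x ∈ Finset.powersetCard k (Finset.univ : Finset V) := by
    intro x hx
    exact Finset.mem_powersetCard_univ.mpr (auxA_card ((Finset.mem_filter.mp hx).2).1)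
  rw [← Finset.sum_fiberwise_of_maps_to hmaps (fun x => w2 (auxA k x))]
  have hinner : ∀ sset ∈ Finset.powersetCard k (Finset.univ : Finset V),
      (∑ x ∈ ((Finset.univ : Finset (Fin (k + k) → V)).filter (auxGood k)).filter
        (fun x => auxA k x = sset), w2 (auxA k x))
      = k.factorial * k.factorial * w2 sset := by
    intro sset hset
    have hcongr : ∀ x ∈ ((Finset.univ : Finset (Fin (k + k) → V)).filter (auxGood k)).filter
        (fun x => auxA k x = sset), w2 (auxA k x) = w2 sset := by
      intro x hx
      rw [(Finset.mem_filter.mp hx).2]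
    rw [Finset.sum_congr rfl hcongr, Finset.sum_const, smul_eq_mul, Finset.filter_filter,
      aux_fiber_card k sset (Finset.mem_powersetCard_univ.mp hset)]
  rw [Finset.sum_congr rfl hinner, ← Finset.mul_sum]
  congr 1
  rw [Matrix.trace]
  symm
  apply Finset.sum_bij (i := fun (s : {s : Finset V // s.card = k}) _ => s.1)
  · intro s _
    exact Finset.mem_powersetCard_univ.mpr s.2
  · intro s _ t _ hst
    exact Subtype.ext hst
  · intro sset hset
    exact ⟨⟨sset, Finset.mem_powersetCard_univ.mp hset⟩, Finset.mem_univ _, rfl⟩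
  · intro s _
    show M.diag s = w2 s.1
    simp only [hw2]
    rw [dif_pos s.2]
    rfl

lemma aux_adj_hermitian {V : Type*} [Fintype V] [DecidableEq V] (G : SimpleGraph V) (k : ℕ) :
    ((symPow G k).adjMatrix ℝ).IsHermitian := by
  show _ = _
  ext i j
  rw [Matrix.conjTranspose_apply, star_trivial, SimpleGraph.adjMatrix_apply,
    SimpleGraph.adjMatrix_apply]
  by_cases hadj : (symPow G k).Adj i j
  · rw [if_pos hadj, if_pos (hadj.symm)]
  · rw [if_neg hadj, if_neg (fun hc => hadj hc.symm)]

/-- If the 2k-dimensional Weisfeiler-Lehman algorithm does not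
distinguish `G` from `H`, then the k-th symmetric powers `G^{k}` and `H^{k}` are
cospectral. -/
theorem symPow_cospectral_of_WL2k_multisets_eq
    {V V' : Type*} [Fintype V] [Fintype V'] [DecidableEq V] [DecidableEq V']
    (G : SimpleGraph V) (H : SimpleGraph V') (k : ℕ)
    (hcard : Fintype.card V = Fintype.card V')
    (h : ∀ r : ℕ,
      (Finset.univ.val.map fun x : Fin (k + k) → V => WL G (k + k) r x) =
      (Finset.univ.val.map fun x : Fin (k + k) → V' => WL H (k + k) r x)) :
    ((symPow G k).adjMatrix ℝ).charpoly = ((symPow H k).adjMatrix ℝ).charpoly := by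
  have htrace : ∀ L : ℕ, 0 < L →
      ((symPow G k).adjMatrix ℕ ^ L).trace = ((symPow H k).adjMatrix ℕ ^ L).trace := by
    intro L hL
    obtain ⟨r, rfl⟩ : ∃ r, L = r + 1 := ⟨L - 1, by omega⟩
    have hmul := congrArg (fun M => (Multiset.map (auxPhi k r) M).sum) (h (r + 1))
    simp only [Multiset.map_map, Function.comp] at hmul
    have hG := aux_trace G k r
    have hH := aux_trace H k r
    rw [hG, hH] at hmul
    exact Nat.eq_of_mul_eq_mul_left
      (Nat.mul_pos (Nat.factorial_pos k) (Nat.factorial_pos k)) hmul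
  have hmapG : (symPow G k).adjMatrix ℝ
      = (Nat.castRingHom ℝ).mapMatrix ((symPow G k).adjMatrix ℕ) := by
    ext i j
    rw [RingHom.mapMatrix_apply, Matrix.map_apply, SimpleGraph.adjMatrix_apply,
      SimpleGraph.adjMatrix_apply]
    split <;> simp
  have hmapH : (symPow H k).adjMatrix ℝ
      = (Nat.castRingHom ℝ).mapMatrix ((symPow H k).adjMatrix ℕ) := by
    ext i j
    rw [RingHom.mapMatrix_apply, Matrix.map_apply, SimpleGraph.adjMatrix_apply,
      SimpleGraph.adjMatrix_apply]
    split <;> simp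
  have htr : ∀ {m : Type} [Fintype m] (M : Matrix m m ℕ),
      ((Nat.castRingHom ℝ).mapMatrix M).trace = (M.trace : ℝ) := by
    intro m _ M
    simp [Matrix.trace, RingHom.mapMatrix_apply, Matrix.map_apply, Matrix.diag]
  have htraceR : ∀ L : ℕ, 0 < L →
      (((symPow G k).adjMatrix ℝ) ^ L).trace = (((symPow H k).adjMatrix ℝ) ^ L).trace := by
    intro L hL
    rw [hmapG, hmapH, ← map_pow, ← map_pow]
    rw [show (((Nat.castRingHom ℝ).mapMatrix ((symPow G k).adjMatrix ℕ ^ L)).trace)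
        = (((symPow G k).adjMatrix ℕ ^ L).trace : ℝ) by
      simp [Matrix.trace, RingHom.mapMatrix_apply, Matrix.map_apply, Matrix.diag]]
    rw [show (((Nat.castRingHom ℝ).mapMatrix ((symPow H k).adjMatrix ℕ ^ L)).trace)
        = (((symPow H k).adjMatrix ℕ ^ L).trace : ℝ) by
      simp [Matrix.trace, RingHom.mapMatrix_apply, Matrix.map_apply, Matrix.diag]]
    rw [htrace L hL]
  have hcards : Fintype.card {s : Finset V // s.card = k}
      = Fintype.card {s : Finset V' // s.card = k} := by
    rw [Fintype.card_finset_len, Fintype.card_finset_len, hcard]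
  exact aux_charpoly_eq_of_trace_pow _ _ (aux_adj_hermitian G k) (aux_adj_hermitian H k)
    hcards htraceR
end

section
/- If G and H are graphs whose k-th symmetric powers are cospectral for some k, then in particular Tr(A_{G^(k)}^r · M_k) = Tr(A_{H^(k)}^r · M_k) for all r ≥ 0, where M_k((i₁...i_k),(j₁...j_k)) = k! if the two tuples of pairwise-distinct vertices are equal as sets and 0 otherwise; conversely this family of trace equalities for all r implies cospectrality of the symmetric powers. -/
attribute [local instance] Classical.propDecidable

namespace AuxSpec

open Polynomial Matrix

variable {n : Type*} [Fintype n] [DecidableEq n]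

lemma myCharpoly_conj (U D V : Matrix n n ℝ) (hUV : U * V = 1) (hVU : V * U = 1) :
    (U * D * V).charpoly = D.charpoly := by
  unfold Matrix.charpoly
  have hm : ∀ A B : Matrix n n ℝ, (A * B).map (C : ℝ → ℝ[X]) = A.map C * B.map C :=
    fun A B => Matrix.map_mul
  have hone : (1 : Matrix n n ℝ).map (C : ℝ → ℝ[X]) = 1 := Matrix.map_one _ (map_zero C) (map_one C)
  have h : charmatrix (U * D * V) = U.map C * charmatrix D * V.map C := by
    have hc : Commute (Matrix.scalar n (X : ℝ[X])) (U.map C) :=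
      Matrix.scalar_commute _ (fun r' => Commute.all _ _) _
    have h1 : U.map C * Matrix.scalar n X * V.map C = Matrix.scalar n (X : ℝ[X]) := by
      rw [← hc.eq, Matrix.mul_assoc, ← hm, hUV, hone, Matrix.mul_one]
    unfold charmatrix
    simp only [RingHom.mapMatrix_apply, mul_sub, sub_mul, hm, h1]
  rw [h, Matrix.det_mul, Matrix.det_mul, mul_comm, ← mul_assoc, ← Matrix.det_mul, ← hm, hVU,
    hone, Matrix.det_one, one_mul]

lemma myCharpoly_diagonal (d : n → ℝ) :
    (Matrix.diagonal d).charpoly = ∏ i, (X - C (d i)) := by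
  have h : charmatrix (Matrix.diagonal d) = Matrix.diagonal fun i => X - C (d i) := by
    ext i j
    by_cases hij : i = j
    · subst hij; simp
    · rw [charmatrix_apply_ne _ _ _ hij, Matrix.diagonal_apply_ne _ hij,
        Matrix.diagonal_apply_ne _ hij]
      simp
  rw [Matrix.charpoly, h, Matrix.det_diagonal]


lemma conj_unit_pow (U D W : Matrix n n ℝ) (h1 : U * W = 1) (h2 : W * U = 1) (r : ℕ) :
    (U * D * W) ^ r = U * D ^ r * W := by
  induction r with
  | zero => simp only [pow_zero, Matrix.mul_one, h1]
  | succ m ih =>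
    rw [pow_succ, ih, pow_succ]
    calc U * D ^ m * W * (U * D * W)
        = U * D ^ m * (W * U) * D * W := by noncomm_ring
      _ = U * (D ^ m * D) * W := by rw [h2]; noncomm_ring

lemma hermitian_spectral (A : Matrix n n ℝ) (hA : A.IsHermitian) :
    A = (hA.eigenvectorUnitary : Matrix n n ℝ) * Matrix.diagonal hA.eigenvalues *
      star (hA.eigenvectorUnitary : Matrix n n ℝ) := by
  have hU := hA.spectral_theorem
  rw [Unitary.conjStarAlgAut_apply, RCLike.ofReal_real_eq_id, Function.id_comp] at hU
  convert hU using 3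

lemma hermitian_charpoly_eq_prod (A : Matrix n n ℝ) (hA : A.IsHermitian) :
    A.charpoly = (((Finset.univ.val.map hA.eigenvalues)).map fun t => X - C t).prod := by
  set U : Matrix n n ℝ := (hA.eigenvectorUnitary : Matrix n n ℝ) with hUdef
  have h1 : U * star U = 1 := (Matrix.mem_unitaryGroup_iff).mp hA.eigenvectorUnitary.2
  have h2 : star U * U = 1 := (Matrix.mem_unitaryGroup_iff').mp hA.eigenvectorUnitary.2
  conv_lhs => rw [hermitian_spectral A hA]
  rw [myCharpoly_conj _ _ _ h1 h2, myCharpoly_diagonal, Multiset.map_map]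
  rfl

lemma hermitian_trace_pow (A : Matrix n n ℝ) (hA : A.IsHermitian) (r : ℕ) :
    (A ^ r).trace = ∑ i, hA.eigenvalues i ^ r := by
  set U : Matrix n n ℝ := (hA.eigenvectorUnitary : Matrix n n ℝ) with hUdef
  have h1 : U * star U = 1 := (Matrix.mem_unitaryGroup_iff).mp hA.eigenvectorUnitary.2
  have h2 : star U * U = 1 := (Matrix.mem_unitaryGroup_iff').mp hA.eigenvectorUnitary.2
  conv_lhs => rw [hermitian_spectral A hA]
  rw [conj_unit_pow _ _ _ h1 h2, Matrix.trace_mul_cycle, h2,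
    Matrix.one_mul, Matrix.diagonal_pow, Matrix.trace_diagonal]
  rfl

open MvPolynomial in
lemma esymm_eval_eq_of_psum_eq {σ τ : Type*} [Fintype σ] [Fintype τ] (f : σ → ℝ) (g : τ → ℝ)
    (hp : ∀ r : ℕ, 0 < r → ∑ i, f i ^ r = ∑ j, g j ^ r) (m : ℕ) :
    aeval f (esymm σ ℝ m) = aeval g (esymm τ ℝ m) := by
  induction m using Nat.strong_induction_on with
  | _ m ih =>
  rcases Nat.eq_zero_or_pos m with hm | hm
  · subst hm; simp [esymm_zero]
  have hpsf : ∀ b, aeval f (psum σ ℝ b) = ∑ i, f i ^ b := by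
    intro b; simp [psum]
  have hpsg : ∀ b, aeval g (psum τ ℝ b) = ∑ i, g i ^ b := by
    intro b; simp [psum]
  have h1 := congrArg (MvPolynomial.aeval f) (MvPolynomial.mul_esymm_eq_sum σ ℝ m)
  have h2 := congrArg (MvPolynomial.aeval g) (MvPolynomial.mul_esymm_eq_sum τ ℝ m)
  simp only [_root_.map_mul, map_sum, map_pow, map_natCast, map_neg, _root_.map_one, hpsf, hpsg] at h1 h2
  have hsum : ∑ a ∈ Finset.HasAntidiagonal.antidiagonal m with a.1 < m,
        (-1 : ℝ) ^ a.1 * aeval f (esymm σ ℝ a.1) * ∑ i, f i ^ a.2 =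
      ∑ a ∈ Finset.HasAntidiagonal.antidiagonal m with a.1 < m,
        (-1 : ℝ) ^ a.1 * aeval g (esymm τ ℝ a.1) * ∑ i, g i ^ a.2 := by
    apply Finset.sum_congr rfl
    intro a ha
    rw [Finset.mem_filter, Finset.HasAntidiagonal.mem_antidiagonal] at ha
    have ha2 : 0 < a.2 := by omega
    rw [ih a.1 ha.2, hp a.2 ha2]
  rw [hsum, ← h2] at h1
  exact mul_left_cancel₀ (by exact_mod_cast hm.ne' : (m : ℝ) ≠ 0) h1

lemma sum_pow_eq_multiset {κ : Type*} [Fintype κ] (h : κ → ℝ) (r : ℕ) :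
    ∑ i, h i ^ r = ((Finset.univ.val.map h).map (· ^ r)).sum := by
  rw [Multiset.map_map]; rfl

lemma charpoly_eq_iff_trace_pow {n m : Type*} [Fintype n] [DecidableEq n] [Fintype m]
    [DecidableEq m] (A : Matrix n n ℝ) (B : Matrix m m ℝ)
    (hA : A.IsHermitian) (hB : B.IsHermitian) :
    A.charpoly = B.charpoly ↔ ∀ r : ℕ, (A ^ r).trace = (B ^ r).trace := by
  constructor
  · intro h r
    have hr := congrArg Polynomial.roots h
    rw [hermitian_charpoly_eq_prod A hA, hermitian_charpoly_eq_prod B hB,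
      Polynomial.roots_multiset_prod_X_sub_C, Polynomial.roots_multiset_prod_X_sub_C] at hr
    rw [hermitian_trace_pow A hA, hermitian_trace_pow B hB, sum_pow_eq_multiset _ r, sum_pow_eq_multiset _ r, hr]
  · intro h
    have hcard : Fintype.card n = Fintype.card m := by
      have h0 := h 0
      simp only [pow_zero, Matrix.trace_one] at h0
      exact_mod_cast h0
    have hp : ∀ r : ℕ, 0 < r → ∑ i, hA.eigenvalues i ^ r = ∑ j, hB.eigenvalues j ^ r := by
      intro r _
      rw [← hermitian_trace_pow A hA, ← hermitian_trace_pow B hB]; exact h r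
    have hes := esymm_eval_eq_of_psum_eq hA.eigenvalues hB.eigenvalues hp
    rw [hermitian_charpoly_eq_prod A hA, hermitian_charpoly_eq_prod B hB,
      Multiset.prod_X_sub_X_eq_sum_esymm, Multiset.prod_X_sub_X_eq_sum_esymm]
    have hc1 : Multiset.card (Finset.univ.val.map hA.eigenvalues) = Fintype.card n := by simp
    have hc2 : Multiset.card (Finset.univ.val.map hB.eigenvalues) = Fintype.card m := by simp
    rw [hc1, hc2, hcard]
    apply Finset.sum_congr rfl
    intro j _
    have e1 := MvPolynomial.aeval_esymm_eq_multiset_esymm n ℝ j hA.eigenvalues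
    have e2 := MvPolynomial.aeval_esymm_eq_multiset_esymm m ℝ j hB.eigenvalues
    rw [← e1, ← e2, hes j]

end AuxSpec

namespace Aux

open Finset Matrix

variable {V : Type*} [Fintype V] [DecidableEq V]

lemma card_image {k : ℕ} (x : {x : Fin k → V // Function.Injective x}) :
    (Finset.univ.image x.1).card = k := by
  rw [Finset.card_image_of_injective _ x.2, Finset.card_univ, Fintype.card_fin]

/-- The image of an injective tuple, as a k-subset. -/
noncomputable def im {k : ℕ} (x : {x : Fin k → V // Function.Injective x}) :
    {s : Finset V // s.card = k} :=
  ⟨Finset.univ.image x.1, card_image x⟩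

/-- The fiber-indicator matrix. -/
noncomputable def P (V : Type*) [Fintype V] [DecidableEq V] (k : ℕ) :
    Matrix {x : Fin k → V // Function.Injective x} {s : Finset V // s.card = k} ℝ :=
  Matrix.of fun x s => if Finset.univ.image x.1 = s.1 then 1 else 0

lemma P_apply {k : ℕ} (x : {x : Fin k → V // Function.Injective x})
    (s : {s : Finset V // s.card = k}) :
    P V k x s = if im x = s then 1 else 0 := by
  unfold P im
  simp only [Matrix.of_apply]
  congr 1
  rw [eq_iff_iff]
  constructor
  · intro h; exact Subtype.ext h
  · intro h; rw [← h]

lemma M_eq (k : ℕ) :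
    (Matrix.of fun x y : {x : Fin k → V // Function.Injective x} =>
        if Finset.univ.image x.1 = Finset.univ.image y.1
        then (Nat.factorial k : ℝ) else 0) =
      (Nat.factorial k : ℝ) • (P V k * (P V k)ᵀ) := by
  ext x y
  simp only [Matrix.of_apply, Matrix.smul_apply, Matrix.mul_apply, Matrix.transpose_apply,
    P_apply, smul_eq_mul]
  have hiff : (Finset.univ.image x.1 = Finset.univ.image y.1) ↔ (im x = im y) := by
    constructor
    · intro h; exact Subtype.ext h
    · intro h; exact congrArg Subtype.val h
  have hsum : ∑ s : {s : Finset V // s.card = k},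
      (if im x = s then (1:ℝ) else 0) * (if im y = s then 1 else 0) =
      if im x = im y then 1 else 0 := by
    rw [Finset.sum_eq_single (im x)]
    · simp [eq_comm]
    · intro s _ hs
      rw [if_neg (fun h => hs h.symm), zero_mul]
    · intro h; exact absurd (Finset.mem_univ _) h
  rw [hsum]
  by_cases h : im x = im y
  · rw [if_pos h, if_pos (hiff.mpr h), mul_one]
  · rw [if_neg h, if_neg (fun hh => h (hiff.mp hh)), mul_zero]


noncomputable def fibreEquiv {k : ℕ} (s : {s : Finset V // s.card = k}) :
    {x : {x : Fin k → V // Function.Injective x} // Finset.univ.image x.1 = s.1} ≃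
      (Fin k ≃ {v // v ∈ s.1}) where
  toFun x := Equiv.ofBijective
    (fun i => (⟨x.1.1 i, by
      have := Finset.mem_image_of_mem x.1.1 (Finset.mem_univ i)
      rwa [x.2] at this⟩ : {v // v ∈ s.1}))
    (by
      refine (Fintype.bijective_iff_injective_and_card _).mpr ⟨?_, ?_⟩
      · intro i j h
        exact x.1.2 (congrArg Subtype.val h)
      · simp [Fintype.card_coe, s.2])
  invFun e := ⟨⟨fun i => (e i).1, fun i j h => e.injective (Subtype.ext h)⟩, by
    ext v
    simp only [Finset.mem_image, Finset.mem_univ, true_and]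
    constructor
    · rintro ⟨i, rfl⟩; exact (e i).2
    · intro hv; exact ⟨e.symm ⟨v, hv⟩, by simp⟩⟩
  left_inv x := by
    apply Subtype.ext; apply Subtype.ext; rfl
  right_inv e := by
    apply Equiv.ext; intro i; apply Subtype.ext; rfl

lemma count_fibre {k : ℕ} (s : {s : Finset V // s.card = k}) :
    (Finset.univ.filter
      (fun x : {x : Fin k → V // Function.Injective x} => Finset.univ.image x.1 = s.1)).card =
      Nat.factorial k := by
  rw [← Fintype.card_subtype]
  rw [Fintype.card_congr (fibreEquiv s)]
  have hcard : Fintype.card (Fin k) = Fintype.card {v // v ∈ s.1} := by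
    simp [Fintype.card_coe, s.2]
  rw [Fintype.card_equiv (Fintype.equivOfCardEq hcard), Fintype.card_fin]

lemma PT_P (k : ℕ) :
    (P V k)ᵀ * P V k = (Nat.factorial k : ℝ) • (1 : Matrix _ _ ℝ) := by
  ext s t
  simp only [Matrix.mul_apply, Matrix.transpose_apply, Matrix.smul_apply, Matrix.one_apply,
    smul_eq_mul, P]
  simp only [Matrix.of_apply]
  by_cases hst : s = t
  · subst hst
    simp only [if_pos rfl, mul_one]
    have : ∀ x : {x : Fin k → V // Function.Injective x},
        (if Finset.univ.image x.1 = s.1 then (1:ℝ) else 0) *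
          (if Finset.univ.image x.1 = s.1 then 1 else 0) =
        if Finset.univ.image x.1 = s.1 then 1 else 0 := by
      intro x; by_cases h : Finset.univ.image x.1 = s.1 <;> simp [h]
    rw [Finset.sum_congr rfl fun x _ => this x, Finset.sum_boole, count_fibre]
    simp
  · rw [if_neg hst, mul_zero]
    apply Finset.sum_eq_zero
    intro x _
    by_cases h1 : Finset.univ.image x.1 = s.1
    · have h2f : ¬(Finset.univ.image x.1 = t.1) :=
        fun h2 => hst (Subtype.ext (h1.symm.trans h2))
      rw [if_neg h2f, mul_zero]
    · rw [if_neg h1, zero_mul]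


variable {k : ℕ} {G : SimpleGraph V}

/-- Basic facts about an edge of the restricted power together with an image condition. -/
lemma adj_facts {x y : {x : Fin k → V // Function.Injective x}} {t : {s : Finset V // s.card = k}}
    (u : Fin k) (hadj : G.Adj (x.1 u) (y.1 u)) (he : ∀ l, l ≠ u → x.1 l = y.1 l)
    (himg : Finset.univ.image y.1 = t.1) :
    (Finset.univ.image x.1) \ t.1 = {x.1 u} ∧ t.1 \ (Finset.univ.image x.1) = {y.1 u} := by
  have hne := G.ne_of_adj hadj
  have hxu_t : x.1 u ∉ t.1 := by
    rw [← himg]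
    intro hm
    obtain ⟨l, -, hl⟩ := Finset.mem_image.mp hm
    by_cases hlu : l = u
    · subst hlu; exact hne hl.symm
    · exact hlu (x.2 ((he l hlu).trans hl))
  have hyu_s : y.1 u ∉ Finset.univ.image x.1 := by
    intro hm
    obtain ⟨l, -, hl⟩ := Finset.mem_image.mp hm
    by_cases hlu : l = u
    · subst hlu; exact hne hl
    · exact hlu (y.2 (((he l hlu).symm.trans hl)))
  constructor
  · ext v
    simp only [Finset.mem_sdiff, Finset.mem_singleton]
    constructor
    · rintro ⟨hvs, hvt⟩
      obtain ⟨l, -, hl⟩ := Finset.mem_image.mp hvs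
      by_cases hlu : l = u
      · exact hlu ▸ hl.symm
      · exfalso
        apply hvt
        rw [← himg, ← hl, he l hlu]
        exact Finset.mem_image_of_mem _ (Finset.mem_univ l)
    · rintro rfl
      exact ⟨Finset.mem_image_of_mem _ (Finset.mem_univ u), hxu_t⟩
  · ext v
    simp only [Finset.mem_sdiff, Finset.mem_singleton]
    constructor
    · rintro ⟨hvt, hvs⟩
      rw [← himg] at hvt
      obtain ⟨l, -, hl⟩ := Finset.mem_image.mp hvt
      by_cases hlu : l = u
      · exact hlu ▸ hl.symm
      · exfalso
        apply hvs
        rw [← hl, ← he l hlu]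
        exact Finset.mem_image_of_mem _ (Finset.mem_univ l)
    · rintro rfl
      refine ⟨?_, hyu_s⟩
      rw [← himg]
      exact Finset.mem_image_of_mem _ (Finset.mem_univ u)


lemma sound {x y : {x : Fin k → V // Function.Injective x}} {t : {s : Finset V // s.card = k}}
    (hxy : (restPow G k).Adj x y) (himg : Finset.univ.image y.1 = t.1) :
    (symPow G k).Adj (im x) t := by
  obtain ⟨u, hadj, he⟩ := hxy
  obtain ⟨h1, h2⟩ := adj_facts u hadj he himg
  refine ⟨x.1 u, y.1 u, hadj, ?_⟩
  show symmDiff (Finset.univ.image x.1) t.1 = _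
  rw [symmDiff_def, Finset.sup_eq_union, h1, h2]
  ext v; simp [Finset.mem_union, Finset.mem_insert]

lemma lift_adj (x : {x : Fin k → V // Function.Injective x}) (t : {s : Finset V // s.card = k})
    (h : (symPow G k).Adj (im x) t) :
    ∃! y : {x : Fin k → V // Function.Injective x},
      (restPow G k).Adj x y ∧ Finset.univ.image y.1 = t.1 := by
  obtain ⟨a, b, hab, hsd⟩ := h
  have hab' : a ≠ b := G.ne_of_adj hab
  have hcards : ((im x).1 \ t.1).card = (t.1 \ (im x).1).card :=
    Finset.card_sdiff_comm (by rw [(im x).2, t.2])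
  have hdisj : Disjoint ((im x).1 \ t.1) (t.1 \ (im x).1) := disjoint_sdiff_sdiff
  have hunion : ((im x).1 \ t.1) ∪ (t.1 \ (im x).1) = {a, b} := by
    rw [← Finset.sup_eq_union, ← symmDiff_def, hsd]
  have hcard2 : ({a, b} : Finset V).card = 2 := Finset.card_pair hab'
  have h1card : ((im x).1 \ t.1).card = 1 := by
    have := Finset.card_union_of_disjoint hdisj
    rw [hunion, hcard2] at this
    omega
  obtain ⟨c, hc⟩ := Finset.card_eq_one.mp h1card
  obtain ⟨d, hd⟩ := Finset.card_eq_one.mp (hcards ▸ h1card)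
  have hcmem := Finset.mem_sdiff.mp (hc ▸ Finset.mem_singleton_self c)
  have hdmem := Finset.mem_sdiff.mp (hd ▸ Finset.mem_singleton_self d)
  have hcd : c ≠ d := fun h => hcmem.2 (h ▸ hdmem.1)
  have hcab : c ∈ ({a, b} : Finset V) := hunion ▸ Finset.mem_union_left _
    (hc ▸ Finset.mem_singleton_self c)
  have hdab : d ∈ ({a, b} : Finset V) := hunion ▸ Finset.mem_union_right _
    (hd ▸ Finset.mem_singleton_self d)
  have hGcd : G.Adj c d := by
    rcases Finset.mem_insert.mp hcab with hca | hcb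
    · rcases Finset.mem_insert.mp hdab with hda | hdb
      · exact absurd (hca.trans hda.symm) hcd
      · rw [hca, Finset.mem_singleton.mp hdb]; exact hab
    · rcases Finset.mem_insert.mp hdab with hda | hdb
      · rw [Finset.mem_singleton.mp hcb, hda]; exact hab.symm
      · exact absurd ((Finset.mem_singleton.mp hcb).trans
          (Finset.mem_singleton.mp hdb).symm) hcd
  obtain ⟨u, -, hu⟩ := Finset.mem_image.mp hcmem.1
  set y1 : Fin k → V := Function.update x.1 u d with hy1
  have hy1u : y1 u = d := Function.update_self u d x.1
  have hy1ne : ∀ l, l ≠ u → y1 l = x.1 l := fun l hl => Function.update_of_ne hl d x.1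
  have hds : d ∉ (im x).1 := hdmem.2
  have hinj : Function.Injective y1 := by
    intro i j hij
    by_cases hiu : i = u <;> by_cases hju : j = u
    · rw [hiu, hju]
    · exfalso; rw [hiu, hy1u, hy1ne j hju] at hij
      exact hds (hij ▸ Finset.mem_image_of_mem _ (Finset.mem_univ j))
    · exfalso; rw [hju, hy1u, hy1ne i hiu] at hij
      exact hds (hij ▸ Finset.mem_image_of_mem _ (Finset.mem_univ i))
    · rw [hy1ne i hiu, hy1ne j hju] at hij; exact x.2 hij
  refine ⟨⟨y1, hinj⟩, ⟨⟨u, ?_, fun l hl => (hy1ne l hl).symm⟩, ?_⟩, ?_⟩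
  · show G.Adj (x.1 u) (y1 u)
    rw [hy1u, hu]; exact hGcd
  · ext v
    simp only [Finset.mem_image, Finset.mem_univ, true_and]
    constructor
    · rintro ⟨i, rfl⟩
      by_cases hiu : i = u
      · rw [hiu, hy1u]; exact hdmem.1
      · rw [hy1ne i hiu]
        by_contra hvt
        have : x.1 i ∈ (im x).1 \ t.1 :=
          Finset.mem_sdiff.mpr ⟨Finset.mem_image_of_mem _ (Finset.mem_univ i), hvt⟩
        rw [hc, Finset.mem_singleton] at this
        exact hiu (x.2 (this.trans hu.symm))
    · intro hv
      by_cases hvs : v ∈ (im x).1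
      · obtain ⟨l, -, hl⟩ := Finset.mem_image.mp hvs
        have hlu : l ≠ u := by
          intro hleq
          rw [hleq, hu] at hl
          exact hcmem.2 (hl ▸ hv)
        exact ⟨l, by rw [hy1ne l hlu]; exact hl⟩
      · have : v ∈ t.1 \ (im x).1 := Finset.mem_sdiff.mpr ⟨hv, hvs⟩
        rw [hd, Finset.mem_singleton] at this
        exact ⟨u, by rw [hy1u, this]⟩
  · rintro z ⟨⟨w, hadjw, hew⟩, hzimg⟩
    obtain ⟨hz1, hz2⟩ := adj_facts w hadjw hew hzimg
    have hxw : x.1 w = c := Finset.singleton_inj.mp (hz1.symm.trans hc)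
    have hwu : w = u := x.2 (hxw.trans hu.symm)
    have hzw : z.1 w = d := Finset.singleton_inj.mp (hz2.symm.trans hd)
    apply Subtype.ext
    funext l
    show z.1 l = y1 l
    by_cases hlu : l = u
    · rw [hlu, ← hwu, hzw, hwu, hy1u]
    · rw [← hew l (hwu ▸ hlu), hy1ne l hlu]


lemma AP_PS (G : SimpleGraph V) (k : ℕ) :
    (restPow G k).adjMatrix ℝ * P V k = P V k * (symPow G k).adjMatrix ℝ := by
  ext x t
  rw [Matrix.mul_apply, Matrix.mul_apply]
  have hrhs : ∑ u, P V k x u * (symPow G k).adjMatrix ℝ u t =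
      if (symPow G k).Adj (im x) t then 1 else 0 := by
    rw [Finset.sum_eq_single (im x)]
    · rw [P_apply, if_pos rfl, one_mul, SimpleGraph.adjMatrix_apply]
    · intro u _ hu
      rw [P_apply, if_neg (fun h => hu h.symm), zero_mul]
    · intro h; exact absurd (Finset.mem_univ _) h
  rw [hrhs]
  by_cases hadj : (symPow G k).Adj (im x) t
  · rw [if_pos hadj]
    obtain ⟨y0, ⟨hy0adj, hy0img⟩, huniq⟩ := lift_adj x t hadj
    rw [Finset.sum_eq_single y0]
    · rw [SimpleGraph.adjMatrix_apply, if_pos hy0adj, one_mul]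
      unfold P; rw [Matrix.of_apply, if_pos hy0img]
    · intro y _ hyne
      by_cases hya : (restPow G k).Adj x y
      · unfold P
        rw [Matrix.of_apply, if_neg (fun himg => hyne (huniq y ⟨hya, himg⟩)), mul_zero]
      · rw [SimpleGraph.adjMatrix_apply, if_neg hya, zero_mul]
    · intro h; exact absurd (Finset.mem_univ _) h
  · rw [if_neg hadj]
    apply Finset.sum_eq_zero
    intro y _
    by_cases hya : (restPow G k).Adj x y
    · unfold P
      rw [Matrix.of_apply, if_neg (fun himg => hadj (sound hya himg)), mul_zero]
    · rw [SimpleGraph.adjMatrix_apply, if_neg hya, zero_mul]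

lemma pow_P (G : SimpleGraph V) (k r : ℕ) :
    (restPow G k).adjMatrix ℝ ^ r * P V k = P V k * (symPow G k).adjMatrix ℝ ^ r := by
  induction r with
  | zero => rw [pow_zero, pow_zero, Matrix.one_mul, Matrix.mul_one]
  | succ m ih =>
    rw [pow_succ, Matrix.mul_assoc, AP_PS, ← Matrix.mul_assoc, ih, Matrix.mul_assoc, ← pow_succ]

lemma trace_formula (G : SimpleGraph V) (k r : ℕ) :
    ((((restPow G k).adjMatrix ℝ) ^ r) *
        (Matrix.of fun x y : {x : Fin k → V // Function.Injective x} =>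
          if Finset.univ.image x.1 = Finset.univ.image y.1
          then (Nat.factorial k : ℝ) else 0)).trace =
      (Nat.factorial k : ℝ) ^ 2 * (((symPow G k).adjMatrix ℝ) ^ r).trace := by
  rw [M_eq, Matrix.mul_smul, Matrix.trace_smul, ← Matrix.mul_assoc, pow_P, Matrix.mul_assoc,
    Matrix.trace_mul_comm, Matrix.mul_assoc, PT_P, Matrix.mul_smul, Matrix.mul_one,
    Matrix.trace_smul]
  simp only [smul_eq_mul]
  ring

lemma adj_herm {W : Type*} [Fintype W] (G' : SimpleGraph W) : (G'.adjMatrix ℝ).IsHermitian := by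
  ext i j
  simp only [Matrix.conjTranspose_apply, star_trivial, SimpleGraph.adjMatrix_apply]
  rw [SimpleGraph.adj_comm]

end Aux


set_option maxHeartbeats 1000000 in
/-- The k-th symmetric powers of `G` and `H` are cospectral if and only
if `Tr(A_{G^(k)}^r · M_k) = Tr(A_{H^(k)}^r · M_k)` for all `r ≥ 0`, where `M_k` has
entry `k!` at pairs of injective k-tuples that are equal as sets, and `0` otherwise. -/
theorem symPow_cospectral_iff_restPow_trace_Mk_eq
    {V V' : Type*} [Fintype V] [Fintype V'] [DecidableEq V] [DecidableEq V']
    (G : SimpleGraph V) (H : SimpleGraph V') (k : ℕ) :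
    ((symPow G k).adjMatrix ℝ).charpoly = ((symPow H k).adjMatrix ℝ).charpoly ↔
      ∀ r : ℕ,
        ((((restPow G k).adjMatrix ℝ) ^ r) *
          (Matrix.of fun x y : {x : Fin k → V // Function.Injective x} =>
            if Finset.univ.image x.1 = Finset.univ.image y.1
            then (Nat.factorial k : ℝ) else 0)).trace =
        ((((restPow H k).adjMatrix ℝ) ^ r) *
          (Matrix.of fun x y : {x : Fin k → V' // Function.Injective x} =>
            if Finset.univ.image x.1 = Finset.univ.image y.1
            then (Nat.factorial k : ℝ) else 0)).trace := by
  rw [AuxSpec.charpoly_eq_iff_trace_pow _ _ (Aux.adj_herm (symPow G k)) (Aux.adj_herm (symPow H k))]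
  constructor
  · intro h r
    rw [Aux.trace_formula G k r, Aux.trace_formula H k r, h r]
  · intro h r
    have hr := h r
    rw [Aux.trace_formula G k r, Aux.trace_formula H k r] at hr
    exact mul_left_cancel₀
      (pow_ne_zero 2 (Nat.cast_ne_zero.mpr (Nat.factorial_ne_zero k))) hr
end
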